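/- arXiv:2201.08021 — 4 statements merged into one kernel-verified Lean document; each statement's English description precedes it below -/
import Mathlib

section
/- Let f ≥ 1 be an integer, q = 2^f, let K be a finite field with |K| = q, and let n ≥ 4 be an even integer. Let J ∈ GLₙ(K) be the block matrix [[I_{n/2}, 0], [I_{n/2}, I_{n/2}]] (lower-triangular with identity diagonal blocks and identity lower-left block). Then the number of involutions A ∈ GLₙ(K) satisfying A·J = J·A is at most i₂(GL_{n/2}(K)) · q^{n²/4 − (n−2)} + q^{n²/4}, where i₂(GL_{n/2}(K)) denotes the number of involutions of GL_{n/2}(K). -/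
set_option maxHeartbeats 1000000
set_option linter.unusedSectionVars false

open Matrix Module


section Helpers

variable {K : Type} [Field K] {m : ℕ}

/-- linear map c ↦ c *ᵥ w -/
def mulVecR (w : Fin m → K) : Matrix (Fin m) (Fin m) K →ₗ[K] (Fin m → K) where
  toFun c := c *ᵥ w
  map_add' x y := Matrix.add_mulVec x y w
  map_smul' r x := Matrix.smul_mulVec r x w

def vecMulL (w : Fin m → K) : Matrix (Fin m) (Fin m) K →ₗ[K] (Fin m → K) where
  toFun c := w ᵥ* c
  map_add' x y := Matrix.vecMul_add x y w
  map_smul' r x := by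
    ext j
    simp [Matrix.vecMul, dotProduct, Finset.mul_sum]
    exact Finset.sum_congr rfl fun k _ => by ring

@[simp] lemma mulVecR_apply (w : Fin m → K) (c) : mulVecR w c = c *ᵥ w := rfl
@[simp] lemma vecMulL_apply (w : Fin m → K) (c) : vecMulL w c = w ᵥ* c := rfl

end Helpers

section Key2

variable {K : Type} [Field K] {m : ℕ}

lemma minor_exists {a b : Fin m → K} (ha : a ≠ 0) (hb : ∀ c : K, b ≠ c • a) :
    ∃ i j, a i * b j - a j * b i ≠ 0 := by
  by_contra h
  push_neg at h
  obtain ⟨k, hk⟩ := Function.ne_iff.mp ha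
  have hk' : a k ≠ 0 := by simpa using hk
  apply hb (b k / a k)
  funext j
  have hkj := h k j
  have : b j = b k / a k * a j := by
    field_simp
    linear_combination hkj
  simpa using this

lemma dual_pair {a b : Fin m → K} (ha : a ≠ 0) (hb : ∀ c : K, b ≠ c • a) :
    ∃ β₁ β₂ : Fin m → K, β₁ ⬝ᵥ a = 1 ∧ β₁ ⬝ᵥ b = 0 ∧ β₂ ⬝ᵥ a = 0 ∧ β₂ ⬝ᵥ b = 1 := by
  obtain ⟨i, j, hd⟩ := minor_exists ha hb
  set d : K := a i * b j - a j * b i with hdef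
  refine ⟨Pi.single i (d⁻¹ * b j) + Pi.single j (-(d⁻¹ * b i)),
          Pi.single j (d⁻¹ * a i) + Pi.single i (-(d⁻¹ * a j)),
          ?_, ?_, ?_, ?_⟩ <;>
    · simp only [add_dotProduct, single_dotProduct]
      rw [hdef] at hd ⊢
      field_simp
      ring

end Key2

section Key

variable {K : Type} [Field K] [Fintype K] {m : ℕ}



lemma card_comm_le (hm : 2 ≤ m) (N : Matrix (Fin m) (Fin m) K) (hN0 : N ≠ 0) (hN2 : N * N = 0) :
    Nat.card {c : Matrix (Fin m) (Fin m) K // N * c = c * N}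
      ≤ Fintype.card K ^ (m * m - (2 * m - 2)) := by
  classical
  obtain ⟨i₀, j₀, hij⟩ : ∃ i j, N i j ≠ 0 := by
    by_contra h
    push_neg at h
    exact hN0 (by ext i j; simp [h])
  set v : Fin m → K := Pi.single j₀ 1 with hv
  set u : Fin m → K := N *ᵥ v with hu
  set α : Fin m → K := Pi.single i₀ 1 with hα
  set αN : Fin m → K := α ᵥ* N with hαN
  have hui : u i₀ = N i₀ j₀ := by simp [hu, hv, Matrix.mulVec_single]
  have hαNj : αN j₀ = N i₀ j₀ := by simp [hαN, hα, Matrix.single_vecMul]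
  have hv0 : v ≠ 0 := by
    intro h
    have := congrFun h j₀
    simp [hv] at this
  have hu0 : u ≠ 0 := by
    intro h
    rw [h] at hui
    exact hij hui.symm
  have hα0 : α ≠ 0 := by
    intro h
    have := congrFun h i₀
    simp [hα] at this
  have hαN0 : αN ≠ 0 := by
    intro h
    rw [h] at hαNj
    exact hij hαNj.symm
  have hNu : N *ᵥ u = 0 := by
    rw [hu, Matrix.mulVec_mulVec, hN2, Matrix.zero_mulVec]
  have hαNN : αN ᵥ* N = 0 := by
    rw [hαN, Matrix.vecMul_vecMul, hN2, Matrix.vecMul_zero]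
  have hindep_vu : ∀ c : K, u ≠ c • v := by
    intro c hc
    have h1 : (0 : Fin m → K) = c • u := by
      calc (0 : Fin m → K) = N *ᵥ u := hNu.symm
        _ = N *ᵥ (c • v) := by rw [← hc]
        _ = c • (N *ᵥ v) := Matrix.mulVec_smul N c v
        _ = c • u := by rw [← hu]
    rcases smul_eq_zero.mp h1.symm with rfl | h
    · rw [zero_smul] at hc; exact hu0 hc
    · exact hu0 h
  have hindep_α : ∀ c : K, αN ≠ c • α := by
    intro c hc
    have h1 : (0 : Fin m → K) = c • αN := by
      calc (0 : Fin m → K) = αN ᵥ* N := hαNN.symm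
        _ = (c • α) ᵥ* N := by rw [← hc]
        _ = c • (α ᵥ* N) := Matrix.smul_vecMul c α N
        _ = c • αN := by rw [← hαN]
    rcases smul_eq_zero.mp h1.symm with rfl | h
    · rw [zero_smul] at hc; exact hαN0 hc
    · exact hαN0 h
  -- the commutant as a submodule
  set S : Submodule K (Matrix (Fin m) (Fin m) K) :=
    LinearMap.ker (LinearMap.mulLeft K N - LinearMap.mulRight K N) with hS
  have hmemS : ∀ c, c ∈ S ↔ N * c = c * N := by
    intro c
    simp [hS, LinearMap.mem_ker, LinearMap.sub_apply, LinearMap.mulLeft_apply,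
      LinearMap.mulRight_apply, sub_eq_zero]
  have hcard1 : Nat.card {c : Matrix (Fin m) (Fin m) K // N * c = c * N} = Nat.card S :=
    Nat.card_congr (Equiv.subtypeEquivRight (fun c => (hmemS c).symm))
  -- the main linear map
  set φ : S →ₗ[K] (Fin m → K) × (Fin m → K) :=
    ((mulVecR v).prod (vecMulL α)).domRestrict S with hφ
  -- the codomain constraint map
  set ψ : ((Fin m → K) × (Fin m → K)) →ₗ[K] K × K :=
    { toFun := fun p => (p.2 ⬝ᵥ v - α ⬝ᵥ p.1, p.2 ⬝ᵥ u - αN ⬝ᵥ p.1)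
      map_add' := by
        intro p q
        simp [add_dotProduct, dotProduct_add, Prod.ext_iff]
        constructor <;> ring
      map_smul' := by
        intro r p
        simp only [smul_dotProduct, dotProduct_smul, Prod.ext_iff, Prod.smul_fst,
          Prod.smul_snd, smul_eq_mul, RingHom.id_apply]
        constructor <;> ring } with hψ
  have hrange : LinearMap.range φ ≤ LinearMap.ker ψ := by
    rintro _ ⟨⟨c, hc⟩, rfl⟩
    have hcomm : N * c = c * N := (hmemS c).mp hc
    have e1 : α ⬝ᵥ (c *ᵥ v) = (α ᵥ* c) ⬝ᵥ v := Matrix.dotProduct_mulVec α c v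
    have e2 : (α ᵥ* c) ⬝ᵥ u = αN ⬝ᵥ (c *ᵥ v) := by
      calc (α ᵥ* c) ⬝ᵥ u = α ⬝ᵥ (c *ᵥ u) := (Matrix.dotProduct_mulVec α c u).symm
        _ = α ⬝ᵥ ((c * N) *ᵥ v) := by rw [hu, Matrix.mulVec_mulVec]
        _ = α ⬝ᵥ ((N * c) *ᵥ v) := by rw [hcomm]
        _ = α ⬝ᵥ (N *ᵥ (c *ᵥ v)) := by rw [Matrix.mulVec_mulVec]
        _ = (α ᵥ* N) ⬝ᵥ (c *ᵥ v) := Matrix.dotProduct_mulVec α N (c *ᵥ v)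
        _ = αN ⬝ᵥ (c *ᵥ v) := by rw [← hαN]
    simp only [LinearMap.mem_ker, hψ, hφ, LinearMap.domRestrict_apply, LinearMap.prod_apply,
      LinearMap.coe_mk, AddHom.coe_mk, Pi.prod, mulVecR_apply, vecMulL_apply]
    rw [Prod.ext_iff]
    constructor
    · simp [e1]
    · simp [e2]
  have hψsurj : Function.Surjective ψ := by
    obtain ⟨β₁, β₂, hb1, hb2, hb3, hb4⟩ := dual_pair hv0 hindep_vu
    rintro ⟨s, t⟩
    refine ⟨(0, s • β₁ + t • β₂), ?_⟩
    simp [hψ, add_dotProduct, smul_dotProduct, hb1, hb2, hb3, hb4]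
  have hkerψ : Module.finrank K (LinearMap.ker ψ) = m + m - 2 := by
    have h := LinearMap.finrank_range_add_finrank_ker ψ
    rw [LinearMap.range_eq_top.mpr hψsurj, finrank_top] at h
    simp [Module.finrank_prod, Module.finrank_pi, Module.finrank_self] at h
    omega
  have hrangebound : Module.finrank K (LinearMap.range φ) ≤ m + m - 2 := by
    rw [← hkerψ]
    exact Submodule.finrank_mono hrange
  -- kernel analysis
  set V1 : Submodule K (Fin m → K) := Submodule.span K (Set.range ![v, u]) with hV1
  set L : (Fin m → K) →ₗ[K] K × K :=
    { toFun := fun x => (α ⬝ᵥ x, αN ⬝ᵥ x)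
      map_add' := by intro p q; simp [dotProduct_add]
      map_smul' := by intro r p; simp [dotProduct_smul] } with hL
  set V2 : Submodule K (Fin m → K) := LinearMap.ker L with hV2
  set S₀ : Submodule K (Matrix (Fin m) (Fin m) K) :=
    LinearMap.ker (mulVecR v) ⊓ LinearMap.ker (mulVecR u) ⊓ LinearMap.ker (vecMulL α)
      ⊓ LinearMap.ker (vecMulL αN) with hS₀
  have hmemS₀ : ∀ c, c ∈ S₀ ↔ c *ᵥ v = 0 ∧ c *ᵥ u = 0 ∧ α ᵥ* c = 0 ∧ αN ᵥ* c = 0 := by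
    intro c
    simp only [hS₀, Submodule.mem_inf, LinearMap.mem_ker, mulVecR_apply, vecMulL_apply]
    tauto
  have hkermap : Submodule.map S.subtype (LinearMap.ker φ) ≤ S₀ := by
    rintro _ ⟨⟨c, hcS⟩, hck, rfl⟩
    have hcomm : N * c = c * N := (hmemS c).mp hcS
    have h0 := LinearMap.mem_ker.mp hck
    rw [hφ] at h0
    simp only [LinearMap.domRestrict_apply, LinearMap.prod_apply, Function.prod_apply, mulVecR_apply,
      vecMulL_apply, Prod.mk_eq_zero] at h0
    have h3 : c *ᵥ u = 0 := by
      calc c *ᵥ u = (c * N) *ᵥ v := by rw [hu, Matrix.mulVec_mulVec]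
        _ = (N * c) *ᵥ v := by rw [hcomm]
        _ = N *ᵥ (c *ᵥ v) := (Matrix.mulVec_mulVec v N c).symm
        _ = 0 := by rw [h0.1, Matrix.mulVec_zero]
    have h4 : αN ᵥ* c = 0 := by
      calc αN ᵥ* c = α ᵥ* (N * c) := by rw [hαN, Matrix.vecMul_vecMul]
        _ = α ᵥ* (c * N) := by rw [hcomm]
        _ = (α ᵥ* c) ᵥ* N := (Matrix.vecMul_vecMul α c N).symm
        _ = 0 := by rw [h0.2, Matrix.zero_vecMul]
    exact (hmemS₀ c).mpr ⟨h0.1, h3, h0.2, h4⟩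
  have hkerbound : Module.finrank K (LinearMap.ker φ) ≤ Module.finrank K S₀ := by
    rw [← Submodule.finrank_map_subtype_eq S (LinearMap.ker φ)]
    exact Submodule.finrank_mono hkermap
  -- bound finrank S₀ via Hom space
  have hmemV2 : ∀ (c : S₀) (x : Fin m → K), Matrix.mulVecLin c.1 x ∈ V2 := by
    rintro ⟨c, hc⟩ x
    obtain ⟨h1, h2, h3, h4⟩ := (hmemS₀ c).mp hc
    simp only [hV2, LinearMap.mem_ker, hL, LinearMap.coe_mk, AddHom.coe_mk,
      Matrix.mulVecLin_apply, Prod.mk_eq_zero]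
    constructor
    · rw [Matrix.dotProduct_mulVec, h3, zero_dotProduct]
    · rw [Matrix.dotProduct_mulVec, h4, zero_dotProduct]
  have hleV1 : ∀ c : S₀,
      V1 ≤ LinearMap.ker (LinearMap.codRestrict V2 (Matrix.mulVecLin c.1) (hmemV2 c)) := by
    rintro ⟨c, hc⟩
    obtain ⟨h1, h2, h3, h4⟩ := (hmemS₀ c).mp hc
    rw [hV1, Submodule.span_le]
    rintro x ⟨k, rfl⟩
    rw [SetLike.mem_coe, LinearMap.mem_ker]
    apply Subtype.ext
    rw [LinearMap.codRestrict_apply]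
    fin_cases k
    · simpa [Matrix.mulVecLin_apply] using h1
    · simpa [Matrix.mulVecLin_apply] using h2
  set F : S₀ →ₗ[K] ((Fin m → K) ⧸ V1) →ₗ[K] V2 :=
    { toFun := fun c => Submodule.liftQ V1
        (LinearMap.codRestrict V2 (Matrix.mulVecLin c.1) (hmemV2 c)) (hleV1 c)
      map_add' := by
        intro c c'
        apply LinearMap.ext
        intro xq
        obtain ⟨x, rfl⟩ := Submodule.Quotient.mk_surjective V1 xq
        apply Subtype.ext
        simp [Submodule.liftQ_apply, LinearMap.codRestrict_apply, Matrix.mulVecLin_apply,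
          Matrix.add_mulVec]
      map_smul' := by
        intro r c
        apply LinearMap.ext
        intro xq
        obtain ⟨x, rfl⟩ := Submodule.Quotient.mk_surjective V1 xq
        apply Subtype.ext
        simp [Submodule.liftQ_apply, LinearMap.codRestrict_apply, Matrix.mulVecLin_apply,
          Matrix.smul_mulVec] } with hF
  have hFinj : Function.Injective F := by
    intro c c' h
    have hx : ∀ x : Fin m → K, c.1 *ᵥ x = c'.1 *ᵥ x := by
      intro x
      have h2 := congrArg (fun G => (G (Submodule.Quotient.mk x) : Fin m → K)) h
      simpa [hF, Submodule.liftQ_apply, LinearMap.codRestrict_apply,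
        Matrix.mulVecLin_apply] using h2
    apply Subtype.ext
    ext i j
    have := congrFun (hx (Pi.single j 1)) i
    simpa [Matrix.mulVec_single] using this
  have hquot : Module.finrank K ((Fin m → K) ⧸ V1) = m - 2 := by
    have hli : LinearIndependent K ![v, u] := (LinearIndependent.pair_iff' hv0).mpr (fun a ha => hindep_vu a ha.symm)
    have hV1rank : Module.finrank K V1 = 2 := by
      rw [hV1, finrank_span_eq_card hli]
      simp
    have h := Submodule.finrank_quotient_add_finrank V1
    rw [hV1rank, Module.finrank_pi] at h
    simp at h
    omega
  have hLsurj : Function.Surjective L := by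
    obtain ⟨β₁, β₂, hb1, hb2, hb3, hb4⟩ := dual_pair hα0 hindep_α
    rintro ⟨s, t⟩
    refine ⟨s • β₁ + t • β₂, ?_⟩
    simp [hL, dotProduct_add, dotProduct_smul,
      dotProduct_comm α, dotProduct_comm αN, hb1, hb2, hb3, hb4]
  have hV2rank : Module.finrank K V2 = m - 2 := by
    rw [hV2]
    have h := LinearMap.finrank_range_add_finrank_ker L
    rw [LinearMap.range_eq_top.mpr hLsurj, finrank_top] at h
    simp [Module.finrank_prod, Module.finrank_pi, Module.finrank_self] at h
    omega
  have hS₀bound : Module.finrank K S₀ ≤ (m - 2) * (m - 2) := by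
    have hle := LinearMap.finrank_le_finrank_of_injective hFinj
    rw [Module.finrank_linearMap, hquot, hV2rank] at hle
    exact hle
  have hrank : Module.finrank K S ≤ m * m - (2 * m - 2) := by
    have h := LinearMap.finrank_range_add_finrank_ker φ
    have hSle : Module.finrank K S ≤ (m + m - 2) + (m - 2) * (m - 2) := by
      rw [← h]
      exact Nat.add_le_add hrangebound (hkerbound.trans hS₀bound)
    obtain ⟨k, rfl⟩ : ∃ k, m = k + 2 := ⟨m - 2, by omega⟩
    have harith : (k + 2) * (k + 2) - (2 * (k + 2) - 2) = (k + 2 + (k + 2) - 2) + k * k := by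
      have : (k + 2) * (k + 2) = k * k + 4 * k + 4 := by ring
      omega
    rw [harith]
    simpa using hSle
  rw [hcard1, Nat.card_eq_fintype_card]
  rw [card_eq_pow_finrank (K := K) (V := S)]
  exact Nat.pow_le_pow_right Fintype.card_pos hrank

end Key



section Key

variable {K : Type} [Field K] [Fintype K] {m : ℕ}

/-- an involution in GL_m from a matrix with a² = 1, a ≠ 1 (char 2 not needed here). -/
def invOf (a : Matrix (Fin m) (Fin m) K) (haa : a * a = 1) (hane : a ≠ 1) :
    {X : Matrix.GeneralLinearGroup (Fin m) K // orderOf X = 2} :=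
  ⟨⟨a, a, haa, haa⟩, by
    have h1 : (⟨a, a, haa, haa⟩ : Matrix.GeneralLinearGroup (Fin m) K) ^ 2 = 1 := by
      rw [sq]
      exact Units.ext haa
    have h2 : (⟨a, a, haa, haa⟩ : Matrix.GeneralLinearGroup (Fin m) K) ≠ 1 := by
      intro hcon
      exact hane (congrArg Units.val hcon)
    exact orderOf_eq_prime h1 h2⟩

@[simp] lemma invOf_val (a : Matrix (Fin m) (Fin m) K) (haa : a * a = 1) (hane : a ≠ 1) :
    ((invOf a haa hane).1 : Matrix (Fin m) (Fin m) K) = a := rfl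

end Key

theorem involutions_commuting_with_J (f : ℕ) (hf : 1 ≤ f) (q : ℕ) (hq : q = 2 ^ f)
    (K : Type) [Field K] [Fintype K] (hK : Fintype.card K = q)
    (n m : ℕ) (hnm : n = 2 * m) (hn : 4 ≤ n)
    (J : Matrix.GeneralLinearGroup (Fin m ⊕ Fin m) K)
    (hJ : (J : Matrix (Fin m ⊕ Fin m) (Fin m ⊕ Fin m) K) = Matrix.fromBlocks 1 0 1 1) :
    Nat.card {A : Matrix.GeneralLinearGroup (Fin m ⊕ Fin m) K //
        orderOf A = 2 ∧ A * J = J * A} ≤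
      Nat.card {X : Matrix.GeneralLinearGroup (Fin m) K // orderOf X = 2} *
          q ^ (n ^ 2 / 4 - (n - 2)) + q ^ (n ^ 2 / 4) := by
  classical
  have hm : 2 ≤ m := by omega
  -- characteristic 2
  have h2K : (2 : K) = 0 := by
    have h := FiniteField.cast_card_eq_zero K
    rw [hK, hq] at h
    push_cast at h
    exact (pow_eq_zero_iff (by omega)).mp h
  have hchar : ∀ x : K, x + x = 0 := fun x => by
    rw [← two_mul, h2K, zero_mul]
  have hcharM : ∀ Y : Matrix (Fin m) (Fin m) K, Y + Y = 0 := fun Y => by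
    ext i j
    exact hchar _
  -- block analysis
  have blockfacts : ∀ A : Matrix.GeneralLinearGroup (Fin m ⊕ Fin m) K,
      orderOf A = 2 → A * J = J * A →
      ((A : Matrix (Fin m ⊕ Fin m) (Fin m ⊕ Fin m) K) =
          Matrix.fromBlocks (Matrix.toBlocks₁₁ ((A : Matrix (Fin m ⊕ Fin m) (Fin m ⊕ Fin m) K))) 0
            (Matrix.toBlocks₂₁ ((A : Matrix (Fin m ⊕ Fin m) (Fin m ⊕ Fin m) K)))
            (Matrix.toBlocks₁₁ ((A : Matrix (Fin m ⊕ Fin m) (Fin m ⊕ Fin m) K)))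
        ∧ (Matrix.toBlocks₁₁ ((A : Matrix (Fin m ⊕ Fin m) (Fin m ⊕ Fin m) K))) *
            (Matrix.toBlocks₁₁ ((A : Matrix (Fin m ⊕ Fin m) (Fin m ⊕ Fin m) K))) = 1
        ∧ (Matrix.toBlocks₁₁ ((A : Matrix (Fin m ⊕ Fin m) (Fin m ⊕ Fin m) K))) *
            (Matrix.toBlocks₂₁ ((A : Matrix (Fin m ⊕ Fin m) (Fin m ⊕ Fin m) K))) =
            (Matrix.toBlocks₂₁ ((A : Matrix (Fin m ⊕ Fin m) (Fin m ⊕ Fin m) K))) *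
            (Matrix.toBlocks₁₁ ((A : Matrix (Fin m ⊕ Fin m) (Fin m ⊕ Fin m) K)))) := by
    intro A hord hcomm
    set a := Matrix.toBlocks₁₁ ((A : Matrix (Fin m ⊕ Fin m) (Fin m ⊕ Fin m) K)) with ha'
    set b := Matrix.toBlocks₁₂ ((A : Matrix (Fin m ⊕ Fin m) (Fin m ⊕ Fin m) K)) with hb'
    set c := Matrix.toBlocks₂₁ ((A : Matrix (Fin m ⊕ Fin m) (Fin m ⊕ Fin m) K)) with hc'
    set d := Matrix.toBlocks₂₂ ((A : Matrix (Fin m ⊕ Fin m) (Fin m ⊕ Fin m) K)) with hd'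
    have hA : (A : Matrix (Fin m ⊕ Fin m) (Fin m ⊕ Fin m) K) = Matrix.fromBlocks a b c d :=
      (Matrix.fromBlocks_toBlocks _).symm
    have hcm : (A : Matrix (Fin m ⊕ Fin m) (Fin m ⊕ Fin m) K) * (J : Matrix (Fin m ⊕ Fin m) (Fin m ⊕ Fin m) K) =
        (J : Matrix (Fin m ⊕ Fin m) (Fin m ⊕ Fin m) K) * (A : Matrix (Fin m ⊕ Fin m) (Fin m ⊕ Fin m) K) := by
      have h := congrArg Units.val hcomm
      simpa [Units.val_mul] using h
    rw [hA, hJ, Matrix.fromBlocks_multiply, Matrix.fromBlocks_multiply] at hcm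
    simp only [one_mul, mul_one, zero_mul, mul_zero, add_zero, zero_add] at hcm
    obtain ⟨e11, -, e21, -⟩ := Matrix.fromBlocks_inj.mp hcm
    have hb : b = 0 := add_left_cancel (e11.trans (add_zero a).symm)
    have hd : d = a := by
      have h' : c + d = c + a := by rw [e21, add_comm]
      exact add_left_cancel h'
    have hA2 : (A : Matrix (Fin m ⊕ Fin m) (Fin m ⊕ Fin m) K) * (A : Matrix (Fin m ⊕ Fin m) (Fin m ⊕ Fin m) K) = 1 := by
      have h := pow_orderOf_eq_one A
      rw [hord] at h
      have h2 := congrArg Units.val h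
      simpa [sq, Units.val_mul] using congrArg Units.val ((sq A).symm.trans h)
    rw [hA, hb, hd, Matrix.fromBlocks_multiply] at hA2
    rw [← Matrix.fromBlocks_one] at hA2
    simp only [mul_zero, zero_mul, add_zero, zero_add, mul_one, one_mul] at hA2
    obtain ⟨f11, -, f21, -⟩ := Matrix.fromBlocks_inj.mp hA2
    have hac : a * c = c * a := by
      have hneg : -(a * c) = a * c := neg_eq_of_add_eq_zero_left (hcharM (a * c))
      have h3 : c * a = -(a * c) := eq_neg_of_add_eq_zero_left f21
      rw [hneg] at h3
      exact h3.symm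
    exact ⟨by rw [hA, hb, hd], f11, hac⟩
  -- Step 1: inject into pairs (a, c)
  set T : Type := {p : Matrix (Fin m) (Fin m) K × Matrix (Fin m) (Fin m) K //
      p.1 * p.1 = 1 ∧ p.1 * p.2 = p.2 * p.1 ∧ p ≠ (1, 0)} with hT
  have step1 : Nat.card {A : Matrix.GeneralLinearGroup (Fin m ⊕ Fin m) K //
      orderOf A = 2 ∧ A * J = J * A} ≤ Nat.card T := by
    apply Nat.card_le_card_of_injective (fun A => (⟨(
        Matrix.toBlocks₁₁ ((A.1 : Matrix (Fin m ⊕ Fin m) (Fin m ⊕ Fin m) K)),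
        Matrix.toBlocks₂₁ ((A.1 : Matrix (Fin m ⊕ Fin m) (Fin m ⊕ Fin m) K))), by
      obtain ⟨hA, haa, hac⟩ := blockfacts A.1 A.2.1 A.2.2
      refine ⟨haa, hac, ?_⟩
      intro hpair
      have h1 := congrArg Prod.fst hpair
      have h2 := congrArg Prod.snd hpair
      simp only at h1 h2
      have hval : (A.1 : Matrix (Fin m ⊕ Fin m) (Fin m ⊕ Fin m) K) = 1 := by
        rw [hA, h1, h2, Matrix.fromBlocks_one]
      have hA1 : A.1 = 1 := Units.ext hval
      have := A.2.1
      rw [hA1] at this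
      simp at this⟩ : T))
    intro A A' hAA
    have h1 := congrArg (fun t : T => t.1.1) hAA
    have h2 := congrArg (fun t : T => t.1.2) hAA
    simp only at h1 h2
    obtain ⟨hA, -, -⟩ := blockfacts A.1 A.2.1 A.2.2
    obtain ⟨hA', -, -⟩ := blockfacts A'.1 A'.2.1 A'.2.2
    apply Subtype.ext
    apply Units.ext
    rw [hA, hA', h1, h2]
  -- Step 2: split according to whether a = 1
  set Inv : Type := {X : Matrix.GeneralLinearGroup (Fin m) K // orderOf X = 2} with hInv
  have step2 : Nat.card T ≤ Nat.card (Σ X : Inv, {c : Matrix (Fin m) (Fin m) K //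
      (X.1 : Matrix (Fin m) (Fin m) K) * c = c * (X.1 : Matrix (Fin m) (Fin m) K)})
      + Nat.card (Matrix (Fin m) (Fin m) K) := by
    rw [← Nat.card_sum]
    apply Nat.card_le_card_of_injective (fun p : T =>
      if h : p.1.1 = 1 then (Sum.inr p.1.2 : (Σ X : Inv, {c : Matrix (Fin m) (Fin m) K //
        (X.1 : Matrix (Fin m) (Fin m) K) * c = c * (X.1 : Matrix (Fin m) (Fin m) K)})
          ⊕ Matrix (Fin m) (Fin m) K)
      else Sum.inl ⟨invOf p.1.1 p.2.1 h, ⟨p.1.2, p.2.2.1⟩⟩)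
    intro p p' hpp
    dsimp only at hpp
    by_cases h1 : p.1.1 = 1 <;> by_cases h2 : p'.1.1 = 1
    · rw [dif_pos h1, dif_pos h2] at hpp
      have hc := Sum.inr.inj hpp
      apply Subtype.ext
      exact Prod.ext (h1.trans h2.symm) hc
    · rw [dif_pos h1, dif_neg h2] at hpp
      exact absurd hpp (by simp)
    · rw [dif_neg h1, dif_pos h2] at hpp
      exact absurd hpp (by simp)
    · rw [dif_neg h1, dif_neg h2] at hpp
      have h := Sum.inl.inj hpp
      have hfst : p.1.1 = p'.1.1 :=
        congrArg (fun s : (Σ X : Inv, {c : Matrix (Fin m) (Fin m) K //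
          (X.1 : Matrix (Fin m) (Fin m) K) * c = c * (X.1 : Matrix (Fin m) (Fin m) K)}) =>
          ((s.1.1 : Matrix.GeneralLinearGroup (Fin m) K) : Matrix (Fin m) (Fin m) K)) h
      have hsnd : p.1.2 = p'.1.2 := congrArg (fun s : (Σ X : Inv, {c : Matrix (Fin m) (Fin m) K //
          (X.1 : Matrix (Fin m) (Fin m) K) * c = c * (X.1 : Matrix (Fin m) (Fin m) K)}) =>
          (s.2.1 : Matrix (Fin m) (Fin m) K)) h
      apply Subtype.ext
      exact Prod.ext hfst hsnd
  -- Step 3: bound the sigma type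
  have fiberbound : ∀ X : Inv, Nat.card {c : Matrix (Fin m) (Fin m) K //
      (X.1 : Matrix (Fin m) (Fin m) K) * c = c * (X.1 : Matrix (Fin m) (Fin m) K)}
      ≤ Fintype.card K ^ (m * m - (2 * m - 2)) := by
    rintro ⟨X, hX⟩
    set Xm : Matrix (Fin m) (Fin m) K := (X : Matrix (Fin m) (Fin m) K) with hXm
    have hX2 : Xm * Xm = 1 := by
      have h := pow_orderOf_eq_one X
      rw [hX] at h
      simpa [sq, Units.val_mul] using congrArg Units.val ((sq X).symm.trans h)
    have hXne : Xm ≠ 1 := by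
      intro hcon
      have hX1 : X = 1 := Units.ext hcon
      rw [hX1] at hX
      simp at hX
    set N : Matrix (Fin m) (Fin m) K := Xm + 1 with hN
    have hN2 : N * N = 0 := by
      rw [hN, add_mul, mul_add, mul_add, hX2, mul_one, one_mul, one_mul]
      have e : 1 + Xm + (Xm + 1) = (Xm + Xm) + (1 + 1) := by abel
      rw [e, hcharM, hcharM, add_zero]
    have hN0 : N ≠ 0 := by
      intro hcon
      apply hXne
      calc Xm = Xm + (1 + 1) := by rw [hcharM 1, add_zero]
        _ = (Xm + 1) + 1 := by rw [add_assoc]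
        _ = 0 + 1 := by rw [← hN, hcon]
        _ = 1 := zero_add 1
    have hiff : ∀ c : Matrix (Fin m) (Fin m) K, (Xm * c = c * Xm) ↔ (N * c = c * N) := by
      intro c
      rw [hN, add_mul, mul_add, one_mul, mul_one]
      constructor
      · intro h; rw [h]
      · intro h; exact add_right_cancel h
    calc Nat.card {c : Matrix (Fin m) (Fin m) K // Xm * c = c * Xm}
        = Nat.card {c : Matrix (Fin m) (Fin m) K // N * c = c * N} :=
          Nat.card_congr (Equiv.subtypeEquivRight hiff)
      _ ≤ _ := card_comm_le hm N hN0 hN2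
  have step3 : Nat.card (Σ X : Inv, {c : Matrix (Fin m) (Fin m) K //
      (X.1 : Matrix (Fin m) (Fin m) K) * c = c * (X.1 : Matrix (Fin m) (Fin m) K)})
      ≤ Nat.card Inv * Fintype.card K ^ (m * m - (2 * m - 2)) := by
    rw [Nat.card_eq_fintype_card, Nat.card_eq_fintype_card (α := Inv), Fintype.card_sigma]
    calc ∑ X : Inv, Fintype.card {c : Matrix (Fin m) (Fin m) K //
          (X.1 : Matrix (Fin m) (Fin m) K) * c = c * (X.1 : Matrix (Fin m) (Fin m) K)}
        ≤ ∑ _X : Inv, Fintype.card K ^ (m * m - (2 * m - 2)) :=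
          Finset.sum_le_sum (fun X _ => by
            rw [← Nat.card_eq_fintype_card]
            exact fiberbound X)
      _ = Fintype.card Inv * Fintype.card K ^ (m * m - (2 * m - 2)) := by
          rw [Finset.sum_const, Finset.card_univ, smul_eq_mul]
  have step4 : Nat.card (Matrix (Fin m) (Fin m) K) = Fintype.card K ^ (m * m) := by
    rw [Nat.card_eq_fintype_card, card_eq_pow_finrank (K := K), Module.finrank_matrix]
    simp [Module.finrank_self]
  -- arithmetic with n
  have e1 : n ^ 2 / 4 = m * m := by
    subst hnm
    have h4 : (2 * m) ^ 2 = 4 * (m * m) := by ring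
    rw [h4]
    omega
  have e2 : n ^ 2 / 4 - (n - 2) = m * m - (2 * m - 2) := by
    rw [e1]
    omega
  calc Nat.card {A : Matrix.GeneralLinearGroup (Fin m ⊕ Fin m) K //
        orderOf A = 2 ∧ A * J = J * A}
      ≤ Nat.card T := step1
    _ ≤ Nat.card (Σ X : Inv, {c : Matrix (Fin m) (Fin m) K //
        (X.1 : Matrix (Fin m) (Fin m) K) * c = c * (X.1 : Matrix (Fin m) (Fin m) K)})
        + Nat.card (Matrix (Fin m) (Fin m) K) := step2
    _ ≤ Nat.card Inv * Fintype.card K ^ (m * m - (2 * m - 2)) + Fintype.card K ^ (m * m) :=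
        Nat.add_le_add step3 (le_of_eq step4)
    _ = Nat.card Inv * q ^ (n ^ 2 / 4 - (n - 2)) + q ^ (n ^ 2 / 4) := by
        rw [hK, e2, e1]
end

section
/- Let f ≥ 1 be an integer, q = 2^f, let K be a finite field with |K| = q, and let m ≥ 2 and ℓ be integers with 1 ≤ ℓ and 2ℓ ≤ m. Let j_ℓ(m) ∈ Matrix (Fin m) (Fin m) K be the block matrix [[I_ℓ, 0, 0], [0, I_{m−2ℓ}, 0], [I_ℓ, 0, I_ℓ]] (identity diagonal blocks of sizes ℓ, m−2ℓ, ℓ, with the only nonzero off-diagonal block being I_ℓ in the lower-left corner). Then the number of matrices R ∈ Matrix (Fin m) (Fin m) K satisfying R·j_ℓ(m) = j_ℓ(m)·R is at most q^{ℓ² + (m−ℓ)²}. -/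
lemma sum_pair_aux {α : Type*} [AddCommMonoid α] {n : ℕ} (a b : Fin n) (hab : a ≠ b)
    (f : Fin n → α) :
    ∑ k, (if k = a then f k else if k = b then f k else 0) = f a + f b := by
  have h : ∀ k, (if k = a then f k else if k = b then f k else 0)
      = (if k = a then f a else 0) + (if k = b then f b else 0) := by
    intro k
    split_ifs with h1 h2 <;> simp_all
  simp [h, Finset.sum_add_distrib]

lemma sum_single_aux {α : Type*} [AddCommMonoid α] {n : ℕ} (a : Fin n) (f : Fin n → α) :
    ∑ k, (if k = a then f k else 0) = f a := by
  simp

theorem centralizer_of_suzuki_form_bound (f : ℕ) (hf : 1 ≤ f) (q : ℕ) (hq : q = 2 ^ f)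
    (K : Type) [Field K] [Fintype K] (hK : Fintype.card K = q)
    (m ℓ : ℕ) (hm : 2 ≤ m) (hℓ : 1 ≤ ℓ) (hℓm : 2 * ℓ ≤ m)
    (J : Matrix (Fin m) (Fin m) K)
    (hJ : ∀ i j : Fin m, J i j =
      if i = j then 1
      else if (i : ℕ) = (j : ℕ) + (m - ℓ) ∧ (j : ℕ) < ℓ then 1 else 0) :
    Nat.card {R : Matrix (Fin m) (Fin m) K // R * J = J * R} ≤ q ^ (ℓ ^ 2 + (m - ℓ) ^ 2) := by
  classical
  set n := m - ℓ with hndef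
  have hn1 : ℓ ≤ n := by omega
  have hnm : n + ℓ = m := by omega
  -- the entrywise commutation relation
  have hEq : ∀ R : Matrix (Fin m) (Fin m) K, R * J = J * R → ∀ i j : Fin m,
      (if _ : (j : ℕ) < ℓ then R i ⟨(j : ℕ) + n, by omega⟩ else 0)
      = (if _ : n ≤ (i : ℕ) then R ⟨(i : ℕ) - n, by have := i.isLt; omega⟩ j else 0) := by
    intro R hR i j
    have h := congrFun (congrFun hR i) j
    rw [Matrix.mul_apply, Matrix.mul_apply] at h
    simp only [hJ] at h
    have hL : ∑ k, R i k * (if k = j then (1:K)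
        else if (k : ℕ) = (j : ℕ) + n ∧ (j : ℕ) < ℓ then 1 else 0)
        = R i j + (if _ : (j : ℕ) < ℓ then R i ⟨(j : ℕ) + n, by omega⟩ else 0) := by
      by_cases hj : (j : ℕ) < ℓ
      · set jc : Fin m := ⟨(j : ℕ) + n, by omega⟩ with hjc
        have hne : j ≠ jc := by
          intro hcontra
          have := congrArg Fin.val hcontra
          simp [hjc] at this
          omega
        rw [dif_pos hj]
        calc ∑ k, R i k * (if k = j then (1:K)
              else if (k : ℕ) = (j : ℕ) + n ∧ (j : ℕ) < ℓ then 1 else 0)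
            = ∑ k, (if k = j then R i k else if k = jc then R i k else 0) := by
              apply Finset.sum_congr rfl
              intro k _
              have hcond : ((k : ℕ) = (j : ℕ) + n ∧ (j : ℕ) < ℓ) ↔ k = jc := by
                simp [Fin.ext_iff, hjc, hj]
              by_cases h1 : k = j
              · simp [h1]
              · by_cases h2 : k = jc
                · rw [if_neg h1, if_pos (hcond.mpr h2), mul_one, if_neg h1, if_pos h2]
                · rw [if_neg h1, if_neg (mt hcond.mp h2), mul_zero, if_neg h1, if_neg h2]
          _ = R i j + R i jc := sum_pair_aux j jc hne _
      · rw [dif_neg hj]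
        calc ∑ k, R i k * (if k = j then (1:K)
              else if (k : ℕ) = (j : ℕ) + n ∧ (j : ℕ) < ℓ then 1 else 0)
            = ∑ k, (if k = j then R i k else 0) := by
              apply Finset.sum_congr rfl
              intro k _
              by_cases h1 : k = j
              · simp [h1]
              · rw [if_neg h1, if_neg (fun hc => hj hc.2), mul_zero, if_neg h1]
          _ = R i j := sum_single_aux j _
          _ = R i j + 0 := by ring
    have hR' : ∑ k, (if i = k then (1:K)
        else if (i : ℕ) = (k : ℕ) + n ∧ (k : ℕ) < ℓ then 1 else 0) * R k j
        = R i j + (if _ : n ≤ (i : ℕ) then R ⟨(i : ℕ) - n, by have := i.isLt; omega⟩ j else 0) := by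
      by_cases hi : n ≤ (i : ℕ)
      · set ic : Fin m := ⟨(i : ℕ) - n, by have := i.isLt; omega⟩ with hic
        have hne : i ≠ ic := by
          intro hcontra
          have := congrArg Fin.val hcontra
          simp [hic] at this
          omega
        rw [dif_pos hi]
        calc ∑ k, (if i = k then (1:K)
              else if (i : ℕ) = (k : ℕ) + n ∧ (k : ℕ) < ℓ then 1 else 0) * R k j
            = ∑ k, (if k = i then R k j else if k = ic then R k j else 0) := by
              apply Finset.sum_congr rfl
              intro k _
              have hcond : ((i : ℕ) = (k : ℕ) + n ∧ (k : ℕ) < ℓ) ↔ k = ic := by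
                have := i.isLt
                simp only [Fin.ext_iff, hic]
                constructor
                · rintro ⟨h1, h2⟩; omega
                · intro h1; constructor <;> omega
              by_cases h1 : k = i
              · simp [h1]
              · by_cases h2 : k = ic
                · rw [if_neg (fun hc => h1 hc.symm), if_pos (hcond.mpr h2), one_mul,
                    if_neg h1, if_pos h2]
                · rw [if_neg (fun hc => h1 hc.symm), if_neg (mt hcond.mp h2), zero_mul,
                    if_neg h1, if_neg h2]
          _ = R i j + R ic j := sum_pair_aux i ic hne _
      · rw [dif_neg hi]
        calc ∑ k, (if i = k then (1:K)
              else if (i : ℕ) = (k : ℕ) + n ∧ (k : ℕ) < ℓ then 1 else 0) * R k j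
            = ∑ k, (if k = i then R k j else 0) := by
              apply Finset.sum_congr rfl
              intro k _
              have hnc : ¬ ((i : ℕ) = (k : ℕ) + n ∧ (k : ℕ) < ℓ) := by
                rintro ⟨h1, h2⟩; omega
              by_cases h1 : k = i
              · simp [h1]
              · rw [if_neg (fun hc => h1 hc.symm), if_neg hnc, zero_mul, if_neg h1]
          _ = R i j := sum_single_aux i _
          _ = R i j + 0 := by ring
    rw [hL, hR'] at h
    exact add_left_cancel h
  -- constraint: upper-right blocks vanish (rows < ℓ, columns ≥ ℓ)
  have hA : ∀ R : Matrix (Fin m) (Fin m) K, R * J = J * R →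
      ∀ i j : Fin m, (i : ℕ) < ℓ → ℓ ≤ (j : ℕ) → R i j = 0 := by
    intro R hR i j hi hj
    have h := hEq R hR ⟨(i : ℕ) + n, by omega⟩ j
    rw [dif_neg (by omega), dif_pos (by simp)] at h
    have hfin : (⟨((⟨(i : ℕ) + n, by omega⟩ : Fin m) : ℕ) - n, by omega⟩ : Fin m) = i :=
      Fin.ext (by simp)
    rw [hfin] at h
    exact h.symm
  -- constraint: rows < n, columns ≥ n vanish
  have hB : ∀ R : Matrix (Fin m) (Fin m) K, R * J = J * R →
      ∀ i j : Fin m, (i : ℕ) < n → n ≤ (j : ℕ) → R i j = 0 := by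
    intro R hR i j hi hj
    have hjlt := j.isLt
    have h := hEq R hR i ⟨(j : ℕ) - n, by omega⟩
    rw [dif_pos (by simp; omega), dif_neg (by omega)] at h
    have hfin : (⟨((⟨(j : ℕ) - n, by omega⟩ : Fin m) : ℕ) + n, by simp; omega⟩ : Fin m) = j :=
      Fin.ext (by simp; omega)
    rw [hfin] at h
    exact h
  -- constraint: lower-right block equals upper-left block
  have hC : ∀ R : Matrix (Fin m) (Fin m) K, R * J = J * R →
      ∀ i j : Fin m, n ≤ (i : ℕ) → n ≤ (j : ℕ) →
      R i j = R ⟨(i : ℕ) - n, by have := i.isLt; omega⟩ ⟨(j : ℕ) - n, by have := j.isLt; omega⟩ := by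
    intro R hR i j hi hj
    have hjlt := j.isLt
    have h := hEq R hR i ⟨(j : ℕ) - n, by omega⟩
    rw [dif_pos (by simp; omega), dif_pos hi] at h
    have hfin : (⟨((⟨(j : ℕ) - n, by omega⟩ : Fin m) : ℕ) + n, by simp; omega⟩ : Fin m) = j :=
      Fin.ext (by simp; omega)
    rw [hfin] at h
    exact h
  -- the injection
  set φ : {R : Matrix (Fin m) (Fin m) K // R * J = J * R} →
      ((Fin ℓ → Fin ℓ → K) × (Fin n → Fin n → K)) := fun R =>
    (fun a b => R.1 ⟨(a : ℕ), by have := a.isLt; omega⟩ ⟨(b : ℕ), by have := b.isLt; omega⟩,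
     fun a b => R.1 ⟨(a : ℕ) + ℓ, by have := a.isLt; omega⟩ ⟨(b : ℕ), by have := b.isLt; omega⟩)
    with hφ
  have hinj : Function.Injective φ := by
    intro R S h
    have h1 := congrArg Prod.fst h
    have h2 := congrArg Prod.snd h
    simp only [hφ] at h1 h2
    apply Subtype.ext
    ext i j
    have hilt := i.isLt
    have hjlt := j.isLt
    by_cases hi : (i : ℕ) < ℓ
    · by_cases hj : (j : ℕ) < ℓ
      · have := congrFun (congrFun h1 ⟨(i : ℕ), hi⟩) ⟨(j : ℕ), hj⟩
        simpa using this
      · rw [hA R.1 R.2 i j hi (by omega), hA S.1 S.2 i j hi (by omega)]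
    · by_cases hj : (j : ℕ) < n
      · have := congrFun (congrFun h2 ⟨(i : ℕ) - ℓ, by omega⟩) ⟨(j : ℕ), hj⟩
        have hfin : (⟨(((⟨(i : ℕ) - ℓ, by omega⟩ : Fin n)) : ℕ) + ℓ, by simp; omega⟩ : Fin m) = i :=
          Fin.ext (by simp; omega)
        simp only [hfin] at this
        have hfin2 : (⟨(((⟨(j : ℕ), hj⟩ : Fin n)) : ℕ), by omega⟩ : Fin m) = j :=
          Fin.ext (by simp)
        simpa [hfin2] using this
      · by_cases hi2 : n ≤ (i : ℕ)
        · rw [hC R.1 R.2 i j hi2 (by omega), hC S.1 S.2 i j hi2 (by omega)]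
          have := congrFun (congrFun h1 ⟨(i : ℕ) - n, by omega⟩) ⟨(j : ℕ) - n, by omega⟩
          simpa using this
        · rw [hB R.1 R.2 i j (by omega) (by omega), hB S.1 S.2 i j (by omega) (by omega)]
  calc Nat.card {R : Matrix (Fin m) (Fin m) K // R * J = J * R}
      ≤ Nat.card ((Fin ℓ → Fin ℓ → K) × (Fin n → Fin n → K)) :=
        Nat.card_le_card_of_injective φ hinj
    _ = q ^ (ℓ ^ 2 + n ^ 2) := by
        simp only [Nat.card_eq_fintype_card, Fintype.card_prod, Fintype.card_fun,
          Fintype.card_fin, hK]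
        rw [← pow_mul, ← pow_mul, ← pow_add, pow_two, pow_two]
end

section
/- Let f ≥ 1 be an integer, q = 2^f, and let K be a finite field with |K| = q. Then the number of involutions of the special linear group SL₄(K) is strictly greater than q⁵·(q³ − 1). -/
open Matrix
namespace SL4Count
variable {K : Type} [Field K]

def P1 (a b c d : K) : Matrix (Fin 4) (Fin 2) K := !![1,0;0,1;a,b;c,d]
def Q1 (a b c d : K) : Matrix (Fin 2) (Fin 4) K := !![a,b,1,0;c,d,0,1]
def P2 (a b c : K) : Matrix (Fin 4) (Fin 2) K := !![1,0;a,0;0,1;b,c]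
def Q2 (a b c : K) : Matrix (Fin 2) (Fin 4) K := !![a,1,0,0;b,0,c,1]
def P3 (a b : K) : Matrix (Fin 4) (Fin 2) K := !![0,0;1,0;0,1;a,b]
def Q3 (a b : K) : Matrix (Fin 2) (Fin 4) K := !![1,0,0,0;0,a,b,1]
def n1 (m n p r a b c d : K) : Matrix (Fin 4) (Fin 4) K :=
  P1 a b c d * (!![m,n;p,r] * Q1 a b c d)
def n2 (m n p r a b c : K) : Matrix (Fin 4) (Fin 4) K :=
  P2 a b c * (!![m,n;p,r] * Q2 a b c)
def n3 (m n p r a b : K) : Matrix (Fin 4) (Fin 4) K :=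
  P3 a b * (!![m,n;p,r] * Q3 a b)
def r1 (a b c w2 w3 w4 : K) : Matrix (Fin 4) (Fin 4) K :=
  !![a*w2+b*w3+c*w4, w2, w3, w4;
     a*(a*w2+b*w3+c*w4), a*w2, a*w3, a*w4;
     b*(a*w2+b*w3+c*w4), b*w2, b*w3, b*w4;
     c*(a*w2+b*w3+c*w4), c*w2, c*w3, c*w4]
def r2 (w1 w3 w4 : K) : Matrix (Fin 4) (Fin 4) K :=
  !![0,0,0,0; w1,0,w3,w4; 0,0,0,0; 0,0,0,0]

lemma cancel_pair {x y s t : K} (hxy : x ≠ 0 ∨ y ≠ 0)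
    (h1 : x*(s-t) = 0) (h2 : y*(s-t) = 0) : s = t := by
  rcases hxy with hx | hy
  · exact sub_eq_zero.mp ((mul_eq_zero.mp h1).resolve_left hx)
  · exact sub_eq_zero.mp ((mul_eq_zero.mp h2).resolve_left hy)

lemma cancel_triple {x y z s t : K} (hxyz : x ≠ 0 ∨ y ≠ 0 ∨ z ≠ 0)
    (h1 : x*(s-t) = 0) (h2 : y*(s-t) = 0) (h3 : z*(s-t) = 0) : s = t := by
  rcases hxyz with hx | hy | hz
  · exact sub_eq_zero.mp ((mul_eq_zero.mp h1).resolve_left hx)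
  · exact sub_eq_zero.mp ((mul_eq_zero.mp h2).resolve_left hy)
  · exact sub_eq_zero.mp ((mul_eq_zero.mp h3).resolve_left hz)


lemma inj1 {m n p r a b c d m' n' p' r' a' b' c' d' : K} (hd : m*r - n*p ≠ 0)
    (h : n1 m n p r a b c d = n1 m' n' p' r' a' b' c' d') :
    m = m' ∧ n = n' ∧ p = p' ∧ r = r' ∧ a = a' ∧ b = b' ∧ c = c' ∧ d = d' := by
  have h02 := congrFun (congrFun h 0) 2
  have h03 := congrFun (congrFun h 0) 3
  have h12 := congrFun (congrFun h 1) 2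
  have h13 := congrFun (congrFun h 1) 3
  have h00 := congrFun (congrFun h 0) 0
  have h10 := congrFun (congrFun h 1) 0
  have h01 := congrFun (congrFun h 0) 1
  have h11 := congrFun (congrFun h 1) 1
  simp [n1, n2, n3, r1, r2, P1, Q1, P2, Q2, P3, Q3, Matrix.mul_apply,
      Fin.sum_univ_two, Fin.sum_univ_four, Matrix.vecHead, Matrix.vecTail] at h02 h03 h12 h13 h00 h10 h01 h11
  subst h02; subst h03; subst h12; subst h13
  have ea : a = a' := by
    have k : (m*r - n*p) * (a - a') = 0 := by linear_combination r*h00 - n*h10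
    exact sub_eq_zero.mp ((mul_eq_zero.mp k).resolve_left hd)
  have ec : c = c' := by
    have k : (m*r - n*p) * (c - c') = 0 := by linear_combination m*h10 - p*h00
    exact sub_eq_zero.mp ((mul_eq_zero.mp k).resolve_left hd)
  have eb : b = b' := by
    have k : (m*r - n*p) * (b - b') = 0 := by linear_combination r*h01 - n*h11
    exact sub_eq_zero.mp ((mul_eq_zero.mp k).resolve_left hd)
  have ed : d = d' := by
    have k : (m*r - n*p) * (d - d') = 0 := by linear_combination m*h11 - p*h01
    exact sub_eq_zero.mp ((mul_eq_zero.mp k).resolve_left hd)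
  exact ⟨rfl, rfl, rfl, rfl, ea, eb, ec, ed⟩


lemma inj2 {m n p r a b c m' n' p' r' a' b' c' : K} (hd : m*r - n*p ≠ 0)
    (h : n2 m n p r a b c = n2 m' n' p' r' a' b' c') :
    m = m' ∧ n = n' ∧ p = p' ∧ r = r' ∧ a = a' ∧ b = b' ∧ c = c' := by
  have h01 := congrFun (congrFun h 0) 1
  have h03 := congrFun (congrFun h 0) 3
  have h21 := congrFun (congrFun h 2) 1
  have h23 := congrFun (congrFun h 2) 3
  have h11 := congrFun (congrFun h 1) 1
  have h13 := congrFun (congrFun h 1) 3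
  have h00 := congrFun (congrFun h 0) 0
  have h20 := congrFun (congrFun h 2) 0
  have h02 := congrFun (congrFun h 0) 2
  have h22 := congrFun (congrFun h 2) 2
  simp [n1, n2, n3, r1, r2, P1, Q1, P2, Q2, P3, Q3, Matrix.mul_apply,
      Fin.sum_univ_two, Fin.sum_univ_four, Matrix.vecHead, Matrix.vecTail] at h01 h03 h21 h23 h11 h13 h00 h20 h02 h22
  subst h01; subst h03; subst h21; subst h23
  have hmn : m ≠ 0 ∨ n ≠ 0 := by
    by_contra hc; push_neg at hc; exact hd (by rw [hc.1, hc.2]; ring)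
  have hnr : n ≠ 0 ∨ r ≠ 0 := by
    by_contra hc; push_neg at hc; exact hd (by rw [hc.1, hc.2]; ring)
  have ea : a = a' := cancel_pair hmn (by linear_combination h11) (by linear_combination h13)
  have eb : b = b' := cancel_pair hnr (by linear_combination h00 - m*ea)
    (by linear_combination h20 - p*ea)
  have ec : c = c' := cancel_pair hnr (by linear_combination h02) (by linear_combination h22)
  exact ⟨rfl, rfl, rfl, rfl, ea, eb, ec⟩


lemma inj3 {m n p r a b m' n' p' r' a' b' : K} (hd : m*r - n*p ≠ 0)
    (h : n3 m n p r a b = n3 m' n' p' r' a' b') :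
    m = m' ∧ n = n' ∧ p = p' ∧ r = r' ∧ a = a' ∧ b = b' := by
  have h10 := congrFun (congrFun h 1) 0
  have h13 := congrFun (congrFun h 1) 3
  have h20 := congrFun (congrFun h 2) 0
  have h23 := congrFun (congrFun h 2) 3
  have h11 := congrFun (congrFun h 1) 1
  have h21 := congrFun (congrFun h 2) 1
  have h12 := congrFun (congrFun h 1) 2
  have h22 := congrFun (congrFun h 2) 2
  simp [n1, n2, n3, r1, r2, P1, Q1, P2, Q2, P3, Q3, Matrix.mul_apply,
      Fin.sum_univ_two, Fin.sum_univ_four, Matrix.vecHead, Matrix.vecTail] at h10 h13 h20 h23 h11 h21 h12 h22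
  subst h10; subst h13; subst h20; subst h23
  have hnr : n ≠ 0 ∨ r ≠ 0 := by
    by_contra hc; push_neg at hc; exact hd (by rw [hc.1, hc.2]; ring)
  have ea : a = a' := cancel_pair hnr (by linear_combination h11) (by linear_combination h21)
  have eb : b = b' := cancel_pair hnr (by linear_combination h12) (by linear_combination h22)
  exact ⟨rfl, rfl, rfl, rfl, ea, eb⟩


lemma injr1 {a b c w2 w3 w4 a' b' c' w2' w3' w4' : K} (hw : w2 ≠ 0 ∨ w3 ≠ 0 ∨ w4 ≠ 0)
    (h : r1 a b c w2 w3 w4 = r1 a' b' c' w2' w3' w4') :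
    a = a' ∧ b = b' ∧ c = c' ∧ w2 = w2' ∧ w3 = w3' ∧ w4 = w4' := by
  have h01 := congrFun (congrFun h 0) 1
  have h02 := congrFun (congrFun h 0) 2
  have h03 := congrFun (congrFun h 0) 3
  have h11 := congrFun (congrFun h 1) 1
  have h12 := congrFun (congrFun h 1) 2
  have h13 := congrFun (congrFun h 1) 3
  have h21 := congrFun (congrFun h 2) 1
  have h22 := congrFun (congrFun h 2) 2
  have h23 := congrFun (congrFun h 2) 3
  have h31 := congrFun (congrFun h 3) 1
  have h32 := congrFun (congrFun h 3) 2
  have h33 := congrFun (congrFun h 3) 3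
  simp [n1, n2, n3, r1, r2, P1, Q1, P2, Q2, P3, Q3, Matrix.mul_apply,
      Fin.sum_univ_two, Fin.sum_univ_four, Matrix.vecHead, Matrix.vecTail] at h01 h02 h03 h11 h12 h13 h21 h22 h23 h31 h32 h33
  have e2 : w2 = w2' := h01
  have e3 : w3 = w3' := h02
  have e4 : w4 = w4' := h03
  subst e2; subst e3; subst e4
  have ea : a = a' := cancel_triple hw (by linear_combination h11)
    (by linear_combination h12) (by linear_combination h13)
  have eb : b = b' := cancel_triple hw (by linear_combination h21)
    (by linear_combination h22) (by linear_combination h23)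
  have ec : c = c' := cancel_triple hw (by linear_combination h31)
    (by linear_combination h32) (by linear_combination h33)
  exact ⟨ea, eb, ec, rfl, rfl, rfl⟩


lemma injr2 {w1 w3 w4 w1' w3' w4' : K}
    (h : r2 w1 w3 w4 = r2 w1' w3' w4') : w1 = w1' ∧ w3 = w3' ∧ w4 = w4' := by
  have h10 := congrFun (congrFun h 1) 0
  have h12 := congrFun (congrFun h 1) 2
  have h13 := congrFun (congrFun h 1) 3
  simp [n1, n2, n3, r1, r2, P1, Q1, P2, Q2, P3, Q3, Matrix.mul_apply,
      Fin.sum_univ_two, Fin.sum_univ_four, Matrix.vecHead, Matrix.vecTail] at h10 h12 h13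
  exact ⟨h10, h12, h13⟩


lemma c12 {m n p r a b c d m' n' p' r' a' b' c' : K} (hd : m*r - n*p ≠ 0)
    (h : n1 m n p r a b c d = n2 m' n' p' r' a' b' c') : False := by
  have h02 := congrFun (congrFun h 0) 2
  have h03 := congrFun (congrFun h 0) 3
  have h12 := congrFun (congrFun h 1) 2
  have h13 := congrFun (congrFun h 1) 3
  simp [n1, n2, n3, r1, r2, P1, Q1, P2, Q2, P3, Q3, Matrix.mul_apply,
      Fin.sum_univ_two, Fin.sum_univ_four, Matrix.vecHead, Matrix.vecTail] at h02 h03 h12 h13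
  subst h02; subst h03; subst h12; subst h13
  exact hd (by ring)


lemma c13 {m n p r a b c d m' n' p' r' a' b' : K} (hd : m*r - n*p ≠ 0)
    (h : n1 m n p r a b c d = n3 m' n' p' r' a' b') : False := by
  have h02 := congrFun (congrFun h 0) 2
  have h03 := congrFun (congrFun h 0) 3
  simp [n1, n2, n3, r1, r2, P1, Q1, P2, Q2, P3, Q3, Matrix.mul_apply,
      Fin.sum_univ_two, Fin.sum_univ_four, Matrix.vecHead, Matrix.vecTail] at h02 h03
  subst h02; subst h03
  exact hd (by ring)


lemma c1r1 {m n p r a b c d a' b' c' w2 w3 w4 : K} (hd : m*r - n*p ≠ 0)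
    (h : n1 m n p r a b c d = r1 a' b' c' w2 w3 w4) : False := by
  have h02 := congrFun (congrFun h 0) 2
  have h03 := congrFun (congrFun h 0) 3
  have h12 := congrFun (congrFun h 1) 2
  have h13 := congrFun (congrFun h 1) 3
  simp [n1, n2, n3, r1, r2, P1, Q1, P2, Q2, P3, Q3, Matrix.mul_apply,
      Fin.sum_univ_two, Fin.sum_univ_four, Matrix.vecHead, Matrix.vecTail] at h02 h03 h12 h13
  subst h02; subst h03; subst h12; subst h13
  exact hd (by ring)


lemma c1r2 {m n p r a b c d w1 w3 w4 : K} (hd : m*r - n*p ≠ 0)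
    (h : n1 m n p r a b c d = r2 w1 w3 w4) : False := by
  have h02 := congrFun (congrFun h 0) 2
  have h03 := congrFun (congrFun h 0) 3
  simp [n1, n2, n3, r1, r2, P1, Q1, P2, Q2, P3, Q3, Matrix.mul_apply,
      Fin.sum_univ_two, Fin.sum_univ_four, Matrix.vecHead, Matrix.vecTail] at h02 h03
  subst h02; subst h03
  exact hd (by ring)


lemma c23 {m n p r a b c m' n' p' r' a' b' : K} (hd : m*r - n*p ≠ 0)
    (h : n2 m n p r a b c = n3 m' n' p' r' a' b') : False := by
  have h01 := congrFun (congrFun h 0) 1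
  have h03 := congrFun (congrFun h 0) 3
  simp [n1, n2, n3, r1, r2, P1, Q1, P2, Q2, P3, Q3, Matrix.mul_apply,
      Fin.sum_univ_two, Fin.sum_univ_four, Matrix.vecHead, Matrix.vecTail] at h01 h03
  subst h01; subst h03
  exact hd (by ring)


lemma c2r1 {m n p r a b c a' b' c' w2 w3 w4 : K} (hd : m*r - n*p ≠ 0)
    (h : n2 m n p r a b c = r1 a' b' c' w2 w3 w4) : False := by
  have h01 := congrFun (congrFun h 0) 1
  have h03 := congrFun (congrFun h 0) 3
  have h21 := congrFun (congrFun h 2) 1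
  have h23 := congrFun (congrFun h 2) 3
  simp [n1, n2, n3, r1, r2, P1, Q1, P2, Q2, P3, Q3, Matrix.mul_apply,
      Fin.sum_univ_two, Fin.sum_univ_four, Matrix.vecHead, Matrix.vecTail] at h01 h03 h21 h23
  subst h01; subst h03; subst h21; subst h23
  exact hd (by ring)


lemma c2r2 {m n p r a b c w1 w3 w4 : K} (hd : m*r - n*p ≠ 0)
    (h : n2 m n p r a b c = r2 w1 w3 w4) : False := by
  have h01 := congrFun (congrFun h 0) 1
  have h03 := congrFun (congrFun h 0) 3
  simp [n1, n2, n3, r1, r2, P1, Q1, P2, Q2, P3, Q3, Matrix.mul_apply,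
      Fin.sum_univ_two, Fin.sum_univ_four, Matrix.vecHead, Matrix.vecTail] at h01 h03
  subst h01; subst h03
  exact hd (by ring)


lemma c3r1 {m n p r a b a' b' c' w2 w3 w4 : K} (hw : w2 ≠ 0 ∨ w3 ≠ 0 ∨ w4 ≠ 0)
    (h : n3 m n p r a b = r1 a' b' c' w2 w3 w4) : False := by
  have h01 := congrFun (congrFun h 0) 1
  have h02 := congrFun (congrFun h 0) 2
  have h03 := congrFun (congrFun h 0) 3
  simp [n1, n2, n3, r1, r2, P1, Q1, P2, Q2, P3, Q3, Matrix.mul_apply,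
      Fin.sum_univ_two, Fin.sum_univ_four, Matrix.vecHead, Matrix.vecTail] at h01 h02 h03
  rcases hw with hw | hw | hw
  · exact hw h01.symm
  · exact hw h02.symm
  · exact hw h03.symm


lemma c3r2 {m n p r a b w1 w3 w4 : K} (hd : m*r - n*p ≠ 0)
    (h : n3 m n p r a b = r2 w1 w3 w4) : False := by
  have h20 := congrFun (congrFun h 2) 0
  have h23 := congrFun (congrFun h 2) 3
  simp [n1, n2, n3, r1, r2, P1, Q1, P2, Q2, P3, Q3, Matrix.mul_apply,
      Fin.sum_univ_two, Fin.sum_univ_four, Matrix.vecHead, Matrix.vecTail] at h20 h23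
  subst h20; subst h23
  exact hd (by ring)


lemma cr1r2 {a b c w2 w3 w4 w1' w3' w4' : K} (hw : w2 ≠ 0 ∨ w3 ≠ 0 ∨ w4 ≠ 0)
    (h : r1 a b c w2 w3 w4 = r2 w1' w3' w4') : False := by
  have h01 := congrFun (congrFun h 0) 1
  have h02 := congrFun (congrFun h 0) 2
  have h03 := congrFun (congrFun h 0) 3
  simp [n1, n2, n3, r1, r2, P1, Q1, P2, Q2, P3, Q3, Matrix.mul_apply,
      Fin.sum_univ_two, Fin.sum_univ_four, Matrix.vecHead, Matrix.vecTail] at h01 h02 h03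
  rcases hw with hw | hw | hw
  · exact hw h01
  · exact hw h02
  · exact hw h03



lemma sandwich {P : Matrix (Fin 4) (Fin 2) K} {Q : Matrix (Fin 2) (Fin 4) K}
    {M : Matrix (Fin 2) (Fin 2) K} (hQP : Q * P = 0) : (P*(M*Q))*(P*(M*Q)) = 0 := by
  calc (P*(M*Q))*(P*(M*Q)) = P*(M*(Q*(P*(M*Q)))) := by simp only [Matrix.mul_assoc]
  _ = 0 := by rw [← Matrix.mul_assoc Q P, hQP, Matrix.zero_mul, Matrix.mul_zero,
        Matrix.mul_zero]


lemma QP1 (h2 : (2:K) = 0) (a b c d : K) : Q1 a b c d * P1 a b c d = 0 := by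
  ext i j
  fin_cases i <;> fin_cases j <;>
    · simp [Q1, P1, Matrix.mul_apply, Fin.sum_univ_four, Matrix.vecHead, Matrix.vecTail]
      try ring_nf
      try       simp [h2, show (4:K) = 0 from by linear_combination 2*h2]

lemma QP2 (h2 : (2:K) = 0) (a b c : K) : Q2 a b c * P2 a b c = 0 := by
  ext i j
  fin_cases i <;> fin_cases j <;>
    · simp [Q2, P2, Matrix.mul_apply, Fin.sum_univ_four, Matrix.vecHead, Matrix.vecTail]
      try ring_nf
      try       simp [h2, show (4:K) = 0 from by linear_combination 2*h2]

lemma QP3 (h2 : (2:K) = 0) (a b : K) : Q3 a b * P3 a b = 0 := by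
  ext i j
  fin_cases i <;> fin_cases j <;>
    · simp [Q3, P3, Matrix.mul_apply, Fin.sum_univ_four, Matrix.vecHead, Matrix.vecTail]
      try ring_nf
      try       simp [h2, show (4:K) = 0 from by linear_combination 2*h2]

lemma r1_sq (h2 : (2:K) = 0) (a b c w2 w3 w4 : K) : r1 a b c w2 w3 w4 * r1 a b c w2 w3 w4 = 0 := by
  ext i j
  fin_cases i <;> fin_cases j <;>
    · simp [r1, Matrix.mul_apply, Fin.sum_univ_four, Matrix.vecHead, Matrix.vecTail]
      try ring_nf
      try       simp [h2, show (4:K) = 0 from by linear_combination 2*h2]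

lemma r2_sq (w1 w3 w4 : K) : r2 w1 w3 w4 * r2 w1 w3 w4 = 0 := by
  ext i j
  fin_cases i <;> fin_cases j <;>
    · simp [r2, Matrix.mul_apply, Fin.sum_univ_four, Matrix.vecHead, Matrix.vecTail]


lemma gl_det (M : GL (Fin 2) K) :
    M.1 0 0 * M.1 1 1 - M.1 0 1 * M.1 1 0 ≠ 0 := by
  have h : IsUnit (M.1).det := (Matrix.isUnit_iff_isUnit_det _).mp M.isUnit
  rw [Matrix.det_fin_two] at h
  exact h.ne_zero

lemma ne_triple {w2 w3 w4 : K} (h : ((w2, w3, w4) : K × K × K) ≠ 0) :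
    w2 ≠ 0 ∨ w3 ≠ 0 ∨ w4 ≠ 0 := by
  by_contra hc
  push_neg at hc
  exact h (by simp [hc.1, hc.2.1, hc.2.2, Prod.ext_iff])

lemma mat_add_self (h2 : (2:K) = 0) (N : Matrix (Fin 4) (Fin 4) K) : N + N = 0 := by
  ext i j
  simp only [Matrix.add_apply, Matrix.zero_apply]
  linear_combination (N i j) * h2

lemma one_add_sq (h2 : (2:K) = 0) {N : Matrix (Fin 4) (Fin 4) K} (hsq : N * N = 0) :
    (1 + N) * (1 + N) = 1 := by
  have e : (1 + N) * (1 + N) = 1 + (N + N) + N * N := by noncomm_ring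
  rw [e, mat_add_self h2, hsq, add_zero, add_zero]

lemma det_one_add (h2 : (2:K) = 0) {N : Matrix (Fin 4) (Fin 4) K} (hsq : N * N = 0) :
    (1 + N).det = 1 := by
  have hd : (1 + N).det * (1 + N).det = 1 := by
    rw [← Matrix.det_mul, one_add_sq h2 hsq, Matrix.det_one]
  have h3 : ((1 + N).det - 1) * ((1 + N).det - 1) = 0 := by
    linear_combination hd + (1 - (1 + N).det) * h2
  exact sub_eq_zero.mp (mul_self_eq_zero.mp h3)

def mkSL (h2 : (2:K) = 0) {N : Matrix (Fin 4) (Fin 4) K} (hsq : N * N = 0) :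
    Matrix.SpecialLinearGroup (Fin 4) K := ⟨1 + N, det_one_add h2 hsq⟩

lemma order_two (h2 : (2:K) = 0) {N : Matrix (Fin 4) (Fin 4) K} (hsq : N * N = 0)
    (hne : N ≠ 0) : orderOf (mkSL h2 hsq) = 2 := by
  refine orderOf_eq_prime ?_ ?_
  · apply Subtype.ext
    rw [pow_two]
    show (1 + N) * (1 + N) = _
    rw [one_add_sq h2 hsq]
    rfl
  · intro hh
    apply hne
    have h' : (1 : Matrix (Fin 4) (Fin 4) K) + N = 1 := congrArg Subtype.val hh
    exact add_left_cancel (h'.trans (add_zero 1).symm)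



-- nonzero lemmas
lemma n1_ne {m n p r a b c d : K} (hd : m*r - n*p ≠ 0) : n1 m n p r a b c d ≠ 0 := by
  intro h
  have h02 := congrFun (congrFun h 0) 2
  have h03 := congrFun (congrFun h 0) 3
  simp [n1, n2, n3, r1, r2, P1, Q1, P2, Q2, P3, Q3, Matrix.mul_apply,
      Fin.sum_univ_two, Fin.sum_univ_four, Matrix.vecHead, Matrix.vecTail] at h02 h03
  subst h02; subst h03
  exact hd (by ring)

lemma n2_ne {m n p r a b c : K} (hd : m*r - n*p ≠ 0) : n2 m n p r a b c ≠ 0 := by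
  intro h
  have h01 := congrFun (congrFun h 0) 1
  have h03 := congrFun (congrFun h 0) 3
  simp [n1, n2, n3, r1, r2, P1, Q1, P2, Q2, P3, Q3, Matrix.mul_apply,
      Fin.sum_univ_two, Fin.sum_univ_four, Matrix.vecHead, Matrix.vecTail] at h01 h03
  subst h01; subst h03
  exact hd (by ring)

lemma n3_ne {m n p r a b : K} (hd : m*r - n*p ≠ 0) : n3 m n p r a b ≠ 0 := by
  intro h
  have h10 := congrFun (congrFun h 1) 0
  have h13 := congrFun (congrFun h 1) 3
  have h20 := congrFun (congrFun h 2) 0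
  have h23 := congrFun (congrFun h 2) 3
  simp [n1, n2, n3, r1, r2, P1, Q1, P2, Q2, P3, Q3, Matrix.mul_apply,
      Fin.sum_univ_two, Fin.sum_univ_four, Matrix.vecHead, Matrix.vecTail] at h10 h13 h20 h23
  subst h10; subst h13; subst h20; subst h23
  exact hd (by ring)

lemma r1_ne {a b c w2 w3 w4 : K} (hw : w2 ≠ 0 ∨ w3 ≠ 0 ∨ w4 ≠ 0) :
    r1 a b c w2 w3 w4 ≠ 0 := by
  intro h
  have h01 := congrFun (congrFun h 0) 1
  have h02 := congrFun (congrFun h 0) 2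
  have h03 := congrFun (congrFun h 0) 3
  simp [n1, n2, n3, r1, r2, P1, Q1, P2, Q2, P3, Q3, Matrix.mul_apply,
      Fin.sum_univ_two, Fin.sum_univ_four, Matrix.vecHead, Matrix.vecTail] at h01 h02 h03
  rcases hw with hx | hx | hx
  · exact hx h01
  · exact hx h02
  · exact hx h03

lemma r2_ne {w1 w3 w4 : K} (hw : w1 ≠ 0 ∨ w3 ≠ 0 ∨ w4 ≠ 0) : r2 w1 w3 w4 ≠ 0 := by
  intro h
  have h10 := congrFun (congrFun h 1) 0
  have h12 := congrFun (congrFun h 1) 2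
  have h13 := congrFun (congrFun h 1) 3
  simp [n1, n2, n3, r1, r2, P1, Q1, P2, Q2, P3, Q3, Matrix.mul_apply,
      Fin.sum_univ_two, Fin.sum_univ_four, Matrix.vecHead, Matrix.vecTail] at h10 h12 h13
  rcases hw with hx | hx | hx
  · exact hx h10
  · exact hx h12
  · exact hx h13

def Dom (K : Type) [Field K] : Type :=
  (GL (Fin 2) K × K × K × K × K) ⊕ ((GL (Fin 2) K × K × K × K) ⊕
    ((GL (Fin 2) K × K × K) ⊕ (((K × K × K) × {u : K × K × K // u ≠ 0}) ⊕
      {u : K × K × K // u ≠ 0})))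

def bigN : Dom K → Matrix (Fin 4) (Fin 4) K
  | Sum.inl (M, a, b, c, d) => n1 (M.1 0 0) (M.1 0 1) (M.1 1 0) (M.1 1 1) a b c d
  | Sum.inr (Sum.inl (M, a, b, c)) => n2 (M.1 0 0) (M.1 0 1) (M.1 1 0) (M.1 1 1) a b c
  | Sum.inr (Sum.inr (Sum.inl (M, a, b))) => n3 (M.1 0 0) (M.1 0 1) (M.1 1 0) (M.1 1 1) a b
  | Sum.inr (Sum.inr (Sum.inr (Sum.inl ((a, b, c), ⟨(w2, w3, w4), _⟩)))) => r1 a b c w2 w3 w4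
  | Sum.inr (Sum.inr (Sum.inr (Sum.inr ⟨(w1, w3, w4), _⟩))) => r2 w1 w3 w4

lemma bigN_sq (h2 : (2:K) = 0) (u : Dom K) : bigN u * bigN u = 0 := by
  rcases u with ⟨M,a,b,c,d⟩ | ⟨M,a,b,c⟩ | ⟨M,a,b⟩ | ⟨⟨a,b,c⟩,⟨⟨w2,w3,w4⟩,hw⟩⟩ | ⟨⟨w1,w3,w4⟩,hw⟩
  · exact sandwich (QP1 h2 a b c d)
  · exact sandwich (QP2 h2 a b c)
  · exact sandwich (QP3 h2 a b)
  · exact r1_sq h2 a b c w2 w3 w4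
  · exact r2_sq w1 w3 w4

lemma bigN_ne (u : Dom K) : bigN u ≠ 0 := by
  rcases u with ⟨M,a,b,c,d⟩ | ⟨M,a,b,c⟩ | ⟨M,a,b⟩ | ⟨⟨a,b,c⟩,⟨⟨w2,w3,w4⟩,hw⟩⟩ | ⟨⟨w1,w3,w4⟩,hw⟩
  · exact n1_ne (gl_det M)
  · exact n2_ne (gl_det M)
  · exact n3_ne (gl_det M)
  · exact r1_ne (ne_triple hw)
  · exact r2_ne (ne_triple hw)

lemma glext {M M' : GL (Fin 2) K} (e1 : M.1 0 0 = M'.1 0 0) (e2 : M.1 0 1 = M'.1 0 1)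
    (e3 : M.1 1 0 = M'.1 1 0) (e4 : M.1 1 1 = M'.1 1 1) : M = M' := by
  apply Units.ext
  rw [Matrix.eta_fin_two M.1, Matrix.eta_fin_two M'.1, e1, e2, e3, e4]

lemma bigN_inj : Function.Injective (bigN : Dom K → Matrix (Fin 4) (Fin 4) K) := by
  rintro (⟨M,a,b,c,d⟩ | ⟨M,a,b,c⟩ | ⟨M,a,b⟩ | ⟨⟨a,b,c⟩,⟨⟨w2,w3,w4⟩,hw⟩⟩ | ⟨⟨w1,w3,w4⟩,hw⟩)
    (⟨M',a',b',c',d'⟩ | ⟨M',a',b',c'⟩ | ⟨M',a',b'⟩ | ⟨⟨a',b',c'⟩,⟨⟨w2',w3',w4'⟩,hw'⟩⟩ |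
      ⟨⟨w1',w3',w4'⟩,hw'⟩) h <;> simp only [bigN] at h
  · obtain ⟨e1,e2,e3,e4,e5,e6,e7,e8⟩ := inj1 (gl_det M) h
    rw [glext e1 e2 e3 e4, e5, e6, e7, e8]
  · exact (c12 (gl_det M) h).elim
  · exact (c13 (gl_det M) h).elim
  · exact (c1r1 (gl_det M) h).elim
  · exact (c1r2 (gl_det M) h).elim
  · exact (c12 (gl_det M') h.symm).elim
  · obtain ⟨e1,e2,e3,e4,e5,e6,e7⟩ := inj2 (gl_det M) h
    rw [glext e1 e2 e3 e4, e5, e6, e7]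
  · exact (c23 (gl_det M) h).elim
  · exact (c2r1 (gl_det M) h).elim
  · exact (c2r2 (gl_det M) h).elim
  · exact (c13 (gl_det M') h.symm).elim
  · exact (c23 (gl_det M') h.symm).elim
  · obtain ⟨e1,e2,e3,e4,e5,e6⟩ := inj3 (gl_det M) h
    rw [glext e1 e2 e3 e4, e5, e6]
  · exact (c3r1 (ne_triple hw') h).elim
  · exact (c3r2 (gl_det M) h).elim
  · exact (c1r1 (gl_det M') h.symm).elim
  · exact (c2r1 (gl_det M') h.symm).elim
  · exact (c3r1 (ne_triple hw) h.symm).elim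
  · obtain ⟨e1,e2,e3,e4,e5,e6⟩ := injr1 (ne_triple hw) h
    subst e1; subst e2; subst e3; subst e4; subst e5; subst e6; rfl
  · exact (cr1r2 (ne_triple hw) h).elim
  · exact (c1r2 (gl_det M') h.symm).elim
  · exact (c2r2 (gl_det M') h.symm).elim
  · exact (c3r2 (gl_det M') h.symm).elim
  · exact (cr1r2 (ne_triple hw') h.symm).elim
  · obtain ⟨e1,e2,e3⟩ := injr2 h
    subst e1; subst e2; subst e3; rfl

end SL4Count


theorem sl4_involution_count (f : ℕ) (hf : 1 ≤ f) (q : ℕ) (hq : q = 2 ^ f)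
    (K : Type) [Field K] [Fintype K] (hK : Fintype.card K = q) :
    q ^ 5 * (q ^ 3 - 1) <
      Nat.card {A : Matrix.SpecialLinearGroup (Fin 4) K // orderOf A = 2} := by
  classical
  have hq2 : 2 ≤ q := by
    subst hq
    calc 2 = 2 ^ 1 := (pow_one 2).symm
    _ ≤ 2 ^ f := Nat.pow_le_pow_right (by norm_num) hf
  have h2 : (2:K) = 0 := by
    have hc : ((Fintype.card K : ℕ) : K) = 0 := FiniteField.cast_card_eq_zero K
    rw [hK, hq] at hc
    push_cast at hc
    exact (pow_eq_zero_iff (show f ≠ 0 by omega)).mp hc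
  set G : SL4Count.Dom K → {A : Matrix.SpecialLinearGroup (Fin 4) K // orderOf A = 2} :=
    fun u => ⟨SL4Count.mkSL h2 (SL4Count.bigN_sq h2 u),
      SL4Count.order_two h2 (SL4Count.bigN_sq h2 u) (SL4Count.bigN_ne u)⟩ with hG
  have hinj : Function.Injective G := by
    intro u v huv
    apply SL4Count.bigN_inj (K := K)
    have h1 : SL4Count.mkSL h2 (SL4Count.bigN_sq h2 u)
        = SL4Count.mkSL h2 (SL4Count.bigN_sq h2 v) := congrArg Subtype.val huv
    have h1' : (1 : Matrix (Fin 4) (Fin 4) K) + SL4Count.bigN u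
        = 1 + SL4Count.bigN v := congrArg Subtype.val h1
    exact add_left_cancel h1'
  have hle := Nat.card_le_card_of_injective G hinj
  have hGL : Nat.card (GL (Fin 2) K) = (q^2 - 1) * (q^2 - q) := by
    rw [Matrix.card_GL_field, Fin.prod_univ_two]
    simp [hK]
  have hKc : Nat.card K = q := by rw [Nat.card_eq_fintype_card, hK]
  have hsub : Nat.card {u : K × K × K // u ≠ 0} = q^3 - 1 := by
    rw [Nat.card_eq_fintype_card]
    simp [Fintype.card_subtype_compl, Fintype.card_subtype_eq, hK]
    ring_nf
  have hDom : Nat.card (SL4Count.Dom K) =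
      ((q^2-1)*(q^2-q)) * q^4 + (((q^2-1)*(q^2-q)) * q^3 + (((q^2-1)*(q^2-q)) * q^2
        + (q^3 * (q^3-1) + (q^3-1)))) := by
    simp only [SL4Count.Dom, Nat.card_sum, Nat.card_prod, hGL, hKc, hsub]
    ring
  have hfin : q^5 * (q^3 - 1) < Nat.card (SL4Count.Dom K) := by
    rw [hDom]
    have e2 : 1 ≤ q^2 := Nat.one_le_pow _ _ (by omega)
    have e3 : 1 ≤ q^3 := Nat.one_le_pow _ _ (by omega)
    have e4 : q ≤ q^2 := by nlinarith
    zify [e2, e3, e4]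
    have hz : (2:ℤ) ≤ (q:ℤ) := by exact_mod_cast hq2
    nlinarith [hz, pow_pos (show (0:ℤ) < q by omega) 3]
  exact lt_of_lt_of_le hfin hle
end

section
/- Let f ≥ 1 be an integer, q = 2^f, let K be a finite field with |K| = q, and let n ∈ {6, 8}. Then 2 times the number of involutions of the special linear group SLₙ(K) is strictly greater than q^{n²/2}. -/
open Matrix

namespace SL68

lemma surj_mulVec_iff_rows_li {K : Type} [Field K] {a b : ℕ} (T : Matrix (Fin a) (Fin b) K) :
    Function.Surjective T.mulVec ↔ LinearIndependent K (fun i => T i) := by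
  change Function.Surjective T.mulVec ↔ LinearIndependent K T.row
  rw [← Matrix.vecMul_injective_iff (M := T)]
  have hT : (fun v => Matrix.vecMul v T) = Tᵀ.mulVec := by
    funext v
    exact (Matrix.mulVec_transpose T v).symm
  rw [hT]
  have h1 : Function.Surjective T.mulVec ↔ T.rank = a := by
    constructor
    · intro h
      have hr : LinearMap.range T.mulVecLin = ⊤ := LinearMap.range_eq_top.mpr
        (by rw [Matrix.coe_mulVecLin]; exact h)
      rw [Matrix.rank, hr, finrank_top]
      simp [Module.finrank_fintype_fun_eq_card]
    · intro h
      have hr : LinearMap.range T.mulVecLin = ⊤ := by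
        apply Submodule.eq_top_of_finrank_eq
        rw [← Matrix.rank, h]
        simp [Module.finrank_fintype_fun_eq_card]
      have := LinearMap.range_eq_top.mp hr
      rwa [Matrix.coe_mulVecLin] at this
  have h2 : Function.Injective Tᵀ.mulVec ↔ Tᵀ.rank = a := by
    rw [← Matrix.coe_mulVecLin]
    have hrn := LinearMap.finrank_range_add_finrank_ker Tᵀ.mulVecLin
    have hdom : Module.finrank K (Fin a → K) = a := by
      simp [Module.finrank_fintype_fun_eq_card]
    rw [hdom] at hrn
    constructor
    · intro h
      have hk : LinearMap.ker Tᵀ.mulVecLin = ⊥ := LinearMap.ker_eq_bot.mpr h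
      rw [hk, finrank_bot] at hrn
      rw [Matrix.rank]
      omega
    · intro h
      rw [← Matrix.rank, h] at hrn
      have hk0 : Module.finrank K (LinearMap.ker Tᵀ.mulVecLin) = 0 := by omega
      have hk : LinearMap.ker Tᵀ.mulVecLin = ⊥ := Submodule.finrank_eq_zero.mp hk0
      exact LinearMap.ker_eq_bot.mp hk
  rw [h1, h2, Matrix.rank_transpose]


variable {K : Type} [Field K]

lemma mat_add_self (hchar : ∀ x : K, x + x = 0) {α β : Type} (M : Matrix α β K) :
    M + M = 0 := by
  ext i j; exact hchar _

variable {r : ℕ}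

def NA (C S : Matrix (Fin (r+1)) (Fin (r+1)) K) :
    Matrix (Fin (r+1) ⊕ Fin (r+1)) (Fin (r+1) ⊕ Fin (r+1)) K :=
  Matrix.fromRows (1 : Matrix (Fin (r+1)) (Fin (r+1)) K) C * (S * Matrix.fromCols C (1 : Matrix (Fin (r+1)) (Fin (r+1)) K))

def NE (C : Matrix (Fin (r+2)) (Fin r) K) (T : Matrix (Fin r) (Fin (r+2)) K) :
    Matrix (Fin r ⊕ Fin (r+2)) (Fin r ⊕ Fin (r+2)) K :=
  Matrix.fromRows (1 : Matrix (Fin r) (Fin r) K) C * (T * Matrix.fromCols C (1 : Matrix (Fin (r+2)) (Fin (r+2)) K))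

lemma sq_zero {α β γ : Type} [Fintype α] [Fintype β] [Fintype γ]
    (U : Matrix β α K) (X : Matrix α γ K) (W : Matrix γ β K) (h : W * U = 0) :
    (U * (X * W)) * (U * (X * W)) = 0 := by
  have e : (U * (X * W)) * (U * (X * W)) = U * (X * ((W * U) * (X * W))) := by
    simp only [Matrix.mul_assoc]
  rw [e, h, Matrix.zero_mul, Matrix.mul_zero, Matrix.mul_zero]

lemma NA_sq (hchar : ∀ x : K, x + x = 0) (C S : Matrix (Fin (r+1)) (Fin (r+1)) K) :
    NA C S * NA C S = 0 := by
  apply sq_zero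
  rw [Matrix.fromCols_mul_fromRows, Matrix.mul_one, Matrix.one_mul]
  exact mat_add_self hchar C

lemma NE_sq (hchar : ∀ x : K, x + x = 0) (C : Matrix (Fin (r+2)) (Fin r) K)
    (T : Matrix (Fin r) (Fin (r+2)) K) : NE C T * NE C T = 0 := by
  apply sq_zero
  rw [Matrix.fromCols_mul_fromRows, Matrix.mul_one, Matrix.one_mul]
  exact mat_add_self hchar C

lemma NA_blocks (C S : Matrix (Fin (r+1)) (Fin (r+1)) K) :
    NA C S = Matrix.fromBlocks (S*C) S (C*(S*C)) (C*S) := by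
  simp [NA, Matrix.mul_fromCols, Matrix.fromRows_mul_fromCols]

lemma NE_blocks (C : Matrix (Fin (r+2)) (Fin r) K) (T : Matrix (Fin r) (Fin (r+2)) K) :
    NE C T = Matrix.fromBlocks (T*C) T (C*(T*C)) (C*T) := by
  simp [NE, Matrix.mul_fromCols, Matrix.fromRows_mul_fromCols]

lemma NA_rank (C : Matrix (Fin (r+1)) (Fin (r+1)) K) (S : GL (Fin (r+1)) K) :
    r + 1 ≤ (NA C (S : Matrix (Fin (r+1)) (Fin (r+1)) K)).rank := by
  set Sm : Matrix (Fin (r+1)) (Fin (r+1)) K := (S : Matrix (Fin (r+1)) (Fin (r+1)) K) with hSm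
  have h1 : NA C Sm * Matrix.fromRows (0 : Matrix (Fin (r+1)) (Fin (r+1)) K) (1 : Matrix (Fin (r+1)) (Fin (r+1)) K)
      = Matrix.fromRows Sm (C * Sm) := by
    rw [NA, Matrix.mul_assoc, Matrix.mul_assoc, Matrix.fromCols_mul_fromRows,
      Matrix.mul_zero, Matrix.one_mul, zero_add, Matrix.mul_one,
      Matrix.fromRows_mul, Matrix.one_mul]
  have h2 : Matrix.fromCols (1 : Matrix (Fin (r+1)) (Fin (r+1)) K) (0 : Matrix (Fin (r+1)) (Fin (r+1)) K)
      * Matrix.fromRows Sm (C * Sm) = Sm := by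
    rw [Matrix.fromCols_mul_fromRows, Matrix.one_mul, Matrix.zero_mul, add_zero]
  calc r + 1 = Sm.rank := by rw [Matrix.rank_unit S, Fintype.card_fin]
    _ = (Matrix.fromCols (1 : Matrix (Fin (r+1)) (Fin (r+1)) K) (0 : Matrix (Fin (r+1)) (Fin (r+1)) K)
        * (NA C Sm * Matrix.fromRows (0 : Matrix (Fin (r+1)) (Fin (r+1)) K) (1 : Matrix (Fin (r+1)) (Fin (r+1)) K))).rank := by
      rw [h1, h2]
    _ ≤ (NA C Sm * Matrix.fromRows (0 : Matrix (Fin (r+1)) (Fin (r+1)) K) (1 : Matrix (Fin (r+1)) (Fin (r+1)) K)).rank :=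
      Matrix.rank_mul_le_right _ _
    _ ≤ (NA C Sm).rank := Matrix.rank_mul_le_left _ _

lemma NE_rank (C : Matrix (Fin (r+2)) (Fin r) K) (T : Matrix (Fin r) (Fin (r+2)) K) :
    (NE C T).rank ≤ r := by
  calc (NE C T).rank ≤ (Matrix.fromRows (1 : Matrix (Fin r) (Fin r) K) C).rank :=
        Matrix.rank_mul_le_left _ _
    _ ≤ Fintype.card (Fin r) := Matrix.rank_le_card_width _
    _ = r := Fintype.card_fin r

lemma NA_inj (C₁ C₂ : Matrix (Fin (r+1)) (Fin (r+1)) K) (S₁ S₂ : GL (Fin (r+1)) K)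
    (h : NA C₁ (S₁ : Matrix (Fin (r+1)) (Fin (r+1)) K)
       = NA C₂ (S₂ : Matrix (Fin (r+1)) (Fin (r+1)) K)) : C₁ = C₂ ∧ S₁ = S₂ := by
  rw [NA_blocks, NA_blocks] at h
  have h12 : (S₁ : Matrix (Fin (r+1)) (Fin (r+1)) K) = S₂ := by
    have := congrArg Matrix.toBlocks₁₂ h
    simpa [Matrix.toBlocks_fromBlocks₁₂] using this
  have h22 : C₁ * (S₁ : Matrix (Fin (r+1)) (Fin (r+1)) K)
      = C₂ * (S₂ : Matrix (Fin (r+1)) (Fin (r+1)) K) := by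
    have := congrArg Matrix.toBlocks₂₂ h
    simpa [Matrix.toBlocks_fromBlocks₂₂] using this
  rw [← h12] at h22
  have e : (S₁ : Matrix (Fin (r+1)) (Fin (r+1)) K)
      * ((S₁⁻¹ : GL (Fin (r+1)) K) : Matrix (Fin (r+1)) (Fin (r+1)) K) = 1 := by
    rw [← Units.val_mul, mul_inv_cancel, Units.val_one]
  have hC : C₁ = C₂ := by
    have h3 : C₁ * ((S₁ : Matrix (Fin (r+1)) (Fin (r+1)) K)
          * ((S₁⁻¹ : GL (Fin (r+1)) K) : Matrix (Fin (r+1)) (Fin (r+1)) K))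
        = C₂ * ((S₁ : Matrix (Fin (r+1)) (Fin (r+1)) K)
          * ((S₁⁻¹ : GL (Fin (r+1)) K) : Matrix (Fin (r+1)) (Fin (r+1)) K)) := by
      rw [← Matrix.mul_assoc, ← Matrix.mul_assoc, h22]
    rwa [e, Matrix.mul_one, Matrix.mul_one] at h3
  exact ⟨hC, Units.ext h12⟩

lemma NE_inj (C₁ C₂ : Matrix (Fin (r+2)) (Fin r) K) (T₁ T₂ : Matrix (Fin r) (Fin (r+2)) K)
    (hT : Function.Surjective T₁.mulVec) (h : NE C₁ T₁ = NE C₂ T₂) : C₁ = C₂ ∧ T₁ = T₂ := by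
  rw [NE_blocks, NE_blocks] at h
  have h12 : T₁ = T₂ := by
    have := congrArg Matrix.toBlocks₁₂ h
    simpa [Matrix.toBlocks_fromBlocks₁₂] using this
  have h22 : C₁ * T₁ = C₂ * T₂ := by
    have := congrArg Matrix.toBlocks₂₂ h
    simpa [Matrix.toBlocks_fromBlocks₂₂] using this
  rw [← h12] at h22
  obtain ⟨B, hB⟩ := Matrix.mulVec_surjective_iff_exists_right_inverse.mp hT
  have hC : C₁ = C₂ := by
    have := congrArg (fun M => M * B) h22
    simpa [Matrix.mul_assoc, hB] using this
  exact ⟨hC, h12⟩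

lemma NE_ne_zero (hr : 1 ≤ r) (C : Matrix (Fin (r+2)) (Fin r) K)
    (T : Matrix (Fin r) (Fin (r+2)) K) (hT : Function.Surjective T.mulVec) :
    NE C T ≠ 0 := by
  intro h0
  have hz : (Matrix.toBlocks₁₂ (0 : Matrix (Fin r ⊕ Fin (r+2)) (Fin r ⊕ Fin (r+2)) K)) = 0 := by
    ext i j; rfl
  have hT0 : T = 0 := by
    have := congrArg Matrix.toBlocks₁₂ (h0 ▸ (NE_blocks C T).symm)
    rw [hz, Matrix.toBlocks_fromBlocks₁₂] at this
    exact this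
  obtain ⟨v, hv⟩ := hT (fun _ => (1 : K))
  have : (0 : K) = 1 := by
    have := congrFun hv ⟨0, hr⟩
    simpa [hT0, Matrix.zero_mulVec] using this
  exact zero_ne_one this

lemma NA_ne_zero (C : Matrix (Fin (r+1)) (Fin (r+1)) K) (S : GL (Fin (r+1)) K) :
    NA C (S : Matrix (Fin (r+1)) (Fin (r+1)) K) ≠ 0 := by
  intro h0
  have := NA_rank C S
  rw [h0, Matrix.rank_zero] at this
  omega

lemma reindex_mul {α : Type} [Fintype α] [DecidableEq α] {n : ℕ} (e : α ≃ Fin n)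
    (M M' : Matrix α α K) :
    (Matrix.reindex e e M) * (Matrix.reindex e e M') = Matrix.reindex e e (M * M') := by
  simp only [Matrix.reindex_apply]
  exact Matrix.submatrix_mul_equiv M M' e.symm e.symm e.symm

lemma family_card_le [Fintype K] (hchar : ∀ x : K, x + x = 0) (r n : ℕ) (hr : 1 ≤ r)
    (hn1 : (r+1) + (r+1) = n) (hn2 : r + (r+2) = n) :
    Nat.card ((Matrix (Fin (r+1)) (Fin (r+1)) K × GL (Fin (r+1)) K) ⊕
      (Matrix (Fin (r+2)) (Fin r) K ×
        {T : Matrix (Fin r) (Fin (r+2)) K // Function.Surjective T.mulVec}))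
    ≤ Nat.card {N : Matrix (Fin n) (Fin n) K // N * N = 0 ∧ N ≠ 0} := by
  set eA : (Fin (r+1) ⊕ Fin (r+1)) ≃ Fin n := finSumFinEquiv.trans (finCongr hn1) with heA
  set eE : (Fin r ⊕ Fin (r+2)) ≃ Fin n := finSumFinEquiv.trans (finCongr hn2) with heE
  set F : ((Matrix (Fin (r+1)) (Fin (r+1)) K × GL (Fin (r+1)) K) ⊕
      (Matrix (Fin (r+2)) (Fin r) K ×
        {T : Matrix (Fin r) (Fin (r+2)) K // Function.Surjective T.mulVec}))
      → {N : Matrix (Fin n) (Fin n) K // N * N = 0 ∧ N ≠ 0} := fun x =>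
    match x with
    | Sum.inl (C, S) => ⟨Matrix.reindex eA eA (NA C (S : Matrix (Fin (r+1)) (Fin (r+1)) K)),
        by rw [reindex_mul, NA_sq hchar]; simp,
        by
          intro h0
          exact NA_ne_zero C S ((Matrix.reindex eA eA).injective (by simpa using h0))⟩
    | Sum.inr (C, T) => ⟨Matrix.reindex eE eE (NE C T.1),
        by rw [reindex_mul, NE_sq hchar]; simp,
        by
          intro h0
          exact NE_ne_zero hr C T.1 T.2 ((Matrix.reindex eE eE).injective (by simpa using h0))⟩
    with hF
  apply Nat.card_le_card_of_injective F
  intro x y hxy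
  match x, y with
  | Sum.inl (C₁, S₁), Sum.inl (C₂, S₂) => 
    have h : Matrix.reindex eA eA (NA C₁ (S₁ : Matrix (Fin (r+1)) (Fin (r+1)) K))
        = Matrix.reindex eA eA (NA C₂ (S₂ : Matrix (Fin (r+1)) (Fin (r+1)) K)) :=
      congrArg Subtype.val hxy
    obtain ⟨hC, hS⟩ := NA_inj C₁ C₂ S₁ S₂ ((Matrix.reindex eA eA).injective h)
    rw [hC, hS]
  | Sum.inr (C₁, T₁), Sum.inr (C₂, T₂) =>
    have h : Matrix.reindex eE eE (NE C₁ T₁.1) = Matrix.reindex eE eE (NE C₂ T₂.1) :=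
      congrArg Subtype.val hxy
    obtain ⟨hC, hT⟩ := NE_inj C₁ C₂ T₁.1 T₂.1 T₁.2 ((Matrix.reindex eE eE).injective h)
    rw [hC, Subtype.ext hT]
  | Sum.inl (C₁, S₁), Sum.inr (C₂, T₂) =>
    exfalso
    have h : Matrix.reindex eA eA (NA C₁ (S₁ : Matrix (Fin (r+1)) (Fin (r+1)) K))
        = Matrix.reindex eE eE (NE C₂ T₂.1) := congrArg Subtype.val hxy
    have h1 := NA_rank C₁ S₁
    have h2 := NE_rank C₂ T₂.1
    rw [← Matrix.rank_reindex eA eA] at h1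
    rw [← Matrix.rank_reindex eE eE] at h2
    rw [h] at h1
    omega
  | Sum.inr (C₂, T₂), Sum.inl (C₁, S₁) =>
    exfalso
    have h : Matrix.reindex eA eA (NA C₁ (S₁ : Matrix (Fin (r+1)) (Fin (r+1)) K))
        = Matrix.reindex eE eE (NE C₂ T₂.1) := (congrArg Subtype.val hxy).symm
    have h1 := NA_rank C₁ S₁
    have h2 := NE_rank C₂ T₂.1
    rw [← Matrix.rank_reindex eA eA] at h1
    rw [← Matrix.rank_reindex eE eE] at h2
    rw [h] at h1
    omega

lemma involution_card [Fintype K] (hchar : ∀ x : K, x + x = 0) (n : ℕ) :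
    Nat.card {A : Matrix.SpecialLinearGroup (Fin n) K // orderOf A = 2}
    = Nat.card {N : Matrix (Fin n) (Fin n) K // N * N = 0 ∧ N ≠ 0} := by
  haveI : Fact (Nat.Prime 2) := ⟨Nat.prime_two⟩
  apply Nat.card_congr
  refine ⟨fun A => ⟨(A.1 : Matrix (Fin n) (Fin n) K) + 1, ?_, ?_⟩,
    fun Np => ⟨⟨1 + Np.1, ?_⟩, ?_⟩, ?_, ?_⟩
  · -- (X+1)*(X+1) = 0
    have hA2 : A.1 ^ 2 = 1 := by
      have := pow_orderOf_eq_one A.1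
      rwa [A.2] at this
    have hXX : (A.1 : Matrix (Fin n) (Fin n) K) * (A.1 : Matrix (Fin n) (Fin n) K) = 1 := by
      have : A.1 * A.1 = 1 := by rw [← sq, hA2]
      calc (A.1 : Matrix (Fin n) (Fin n) K) * A.1 = ((A.1 * A.1 : _) : Matrix (Fin n) (Fin n) K) :=
            (Matrix.SpecialLinearGroup.coe_mul _ _).symm
        _ = 1 := by rw [this, Matrix.SpecialLinearGroup.coe_one]
    have e1 : ((A.1 : Matrix (Fin n) (Fin n) K) + 1) * ((A.1 : Matrix (Fin n) (Fin n) K) + 1)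
        = (A.1 : Matrix (Fin n) (Fin n) K) * (A.1 : Matrix (Fin n) (Fin n) K)
          + ((A.1 : Matrix (Fin n) (Fin n) K) + (A.1 : Matrix (Fin n) (Fin n) K)) + 1 := by
      noncomm_ring
    rw [e1, hXX, mat_add_self hchar, add_zero, mat_add_self hchar]
  · -- X + 1 ≠ 0
    intro h0
    have hX1 : (A.1 : Matrix (Fin n) (Fin n) K) = 1 := by
      have : (A.1 : Matrix (Fin n) (Fin n) K)
          = ((A.1 : Matrix (Fin n) (Fin n) K) + 1) + 1 := by
        rw [add_assoc, mat_add_self hchar, add_zero]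
      rw [this, h0, zero_add]
    have : A.1 = 1 := Subtype.ext hX1
    have h2 := A.2
    rw [this, orderOf_one] at h2
    exact absurd h2 (by norm_num)
  · -- det (1 + N) = 1
    have hsq : (1 + Np.1) * (1 + Np.1) = 1 := by
      have e1 : (1 + Np.1) * (1 + Np.1) = Np.1 * Np.1 + (Np.1 + Np.1) + 1 := by noncomm_ring
      rw [e1, Np.2.1, mat_add_self hchar, add_zero, zero_add]
    have hd : (1 + Np.1).det * (1 + Np.1).det = 1 := by
      rw [← Matrix.det_mul, hsq, Matrix.det_one]
    have h2 : ((1 + Np.1).det + 1) * ((1 + Np.1).det + 1) = 0 := by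
      have e : ((1 + Np.1).det + 1) * ((1 + Np.1).det + 1)
          = (1 + Np.1).det * (1 + Np.1).det + ((1 + Np.1).det + (1 + Np.1).det) + 1 := by ring
      rw [e, hd, hchar, add_zero, hchar]
    have h3 : (1 + Np.1).det + 1 = 0 := mul_self_eq_zero.mp h2
    have : (1 + Np.1).det = ((1 + Np.1).det + 1) + 1 := by
      rw [add_assoc, hchar, add_zero]
    rw [this, h3, zero_add]
  · -- orderOf = 2
    have hsq : (1 + Np.1) * (1 + Np.1) = 1 := by
      have e1 : (1 + Np.1) * (1 + Np.1) = Np.1 * Np.1 + (Np.1 + Np.1) + 1 := by noncomm_ring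
      rw [e1, Np.2.1, mat_add_self hchar, add_zero, zero_add]
    apply orderOf_eq_prime
    · apply Subtype.ext
      refine (Matrix.SpecialLinearGroup.coe_pow _ 2).trans ?_
      exact (sq _).trans hsq
    · intro h
      have h1 : (1 : Matrix (Fin n) (Fin n) K) + Np.1 = 1 := by
        have := congrArg (fun (B : Matrix.SpecialLinearGroup (Fin n) K)
          => (B : Matrix (Fin n) (Fin n) K)) h
        simpa using this
      exact Np.2.2 (by rwa [add_eq_left] at h1)
  · -- left inverse
    intro A
    apply Subtype.ext
    apply Subtype.ext
    show (1 : Matrix (Fin n) (Fin n) K) + ((A.1 : Matrix (Fin n) (Fin n) K) + 1)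
        = (A.1 : Matrix (Fin n) (Fin n) K)
    have e : (1 : Matrix (Fin n) (Fin n) K) + ((A.1 : Matrix (Fin n) (Fin n) K) + 1)
        = (A.1 : Matrix (Fin n) (Fin n) K) + (1 + 1) := by abel
    rw [e, mat_add_self hchar, add_zero]
  · -- right inverse
    intro Np
    apply Subtype.ext
    show (1 + Np.1) + 1 = Np.1
    have e : (1 + Np.1) + 1 = Np.1 + (1 + 1) := by abel
    rw [e, mat_add_self hchar, add_zero]

lemma card_mat [Fintype K] (a b : ℕ) :
    Nat.card (Matrix (Fin a) (Fin b) K) = (Fintype.card K) ^ (a * b) := by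
  rw [Nat.card_congr (Matrix.of (α := K) (m := Fin a) (n := Fin b)).symm]
  rw [Nat.card_fun, Nat.card_fun]
  simp [Nat.card_eq_fintype_card, ← pow_mul, mul_comm]

lemma card_surj [Fintype K] (a b : ℕ) (hab : a ≤ b) :
    Nat.card {T : Matrix (Fin a) (Fin b) K // Function.Surjective T.mulVec}
      = ∏ i : Fin a, ((Fintype.card K) ^ b - (Fintype.card K) ^ (i : ℕ)) := by
  have e : {T : Matrix (Fin a) (Fin b) K // Function.Surjective T.mulVec}
      ≃ {s : Fin a → (Fin b → K) // LinearIndependent K s} :=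
    Equiv.subtypeEquiv (Matrix.of (α := K) (m := Fin a) (n := Fin b)).symm
      (fun T => surj_mulVec_iff_rows_li T)
  rw [Nat.card_congr e]
  have hfr : Module.finrank K (Fin b → K) = b := by
    simp [Module.finrank_fintype_fun_eq_card]
  rw [card_linearIndependent (by rw [hfr]; exact hab)]
  simp [hfr]

end SL68

lemma arith3 (q : ℕ) (hq : 2 ≤ q) :
    q ^ 18 < 2 * (q ^ 9 * ((q ^ 3 - 1) * (q ^ 3 - q) * (q ^ 3 - q ^ 2)) +
      q ^ 8 * ((q ^ 4 - 1) * (q ^ 4 - q))) := by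
  have l1 : 1 ≤ q ^ 3 := Nat.one_le_pow _ _ (by omega)
  have l2 : q ≤ q ^ 3 := Nat.le_self_pow (by omega) q
  have l3 : q ^ 2 ≤ q ^ 3 := Nat.pow_le_pow_right (by omega) (by omega)
  have l4 : 1 ≤ q ^ 4 := Nat.one_le_pow _ _ (by omega)
  have l5 : q ≤ q ^ 4 := Nat.le_self_pow (by omega) q
  zify [l1, l2, l3, l4, l5]
  have hx : (2 : ℤ) ≤ (q : ℤ) := by exact_mod_cast hq
  set x : ℤ := (q : ℤ) with hxdef
  have key : 2 * (x ^ 9 * ((x ^ 3 - 1) * (x ^ 3 - x) * (x ^ 3 - x ^ 2)) +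
      x ^ 8 * ((x ^ 4 - 1) * (x ^ 4 - x))) - x ^ 18
      = x ^ 9 * (x ^ 8 * (x - 2) + 2 * x ^ 3 * (x ^ 2 - 2) + 2) := by ring
  have hA : 0 ≤ x ^ 8 * (x - 2) := by
    apply mul_nonneg (pow_nonneg (by linarith) _) (by linarith)
  have hB : 0 ≤ 2 * x ^ 3 * (x ^ 2 - 2) := by
    apply mul_nonneg (by positivity)
    nlinarith
  have hpos : 0 < x ^ 9 * (x ^ 8 * (x - 2) + 2 * x ^ 3 * (x ^ 2 - 2) + 2) := by
    apply mul_pos (pow_pos (by linarith) _)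
    linarith
  linarith [key, hpos]

lemma arith4 (q : ℕ) (hq : 2 ≤ q) :
    q ^ 32 < 2 * (q ^ 16 * ((q ^ 4 - 1) * (q ^ 4 - q) * (q ^ 4 - q ^ 2) * (q ^ 4 - q ^ 3)) +
      q ^ 15 * ((q ^ 5 - 1) * (q ^ 5 - q) * (q ^ 5 - q ^ 2))) := by
  have l1 : 1 ≤ q ^ 4 := Nat.one_le_pow _ _ (by omega)
  have l2 : q ≤ q ^ 4 := Nat.le_self_pow (by omega) q
  have l3 : q ^ 2 ≤ q ^ 4 := Nat.pow_le_pow_right (by omega) (by omega)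
  have l4 : q ^ 3 ≤ q ^ 4 := Nat.pow_le_pow_right (by omega) (by omega)
  have l5 : 1 ≤ q ^ 5 := Nat.one_le_pow _ _ (by omega)
  have l6 : q ≤ q ^ 5 := Nat.le_self_pow (by omega) q
  have l7 : q ^ 2 ≤ q ^ 5 := Nat.pow_le_pow_right (by omega) (by omega)
  zify [l1, l2, l3, l4, l5, l6, l7]
  have hx : (2 : ℤ) ≤ (q : ℤ) := by exact_mod_cast hq
  set x : ℤ := (q : ℤ) with hxdef
  have key : 2 * (x ^ 16 * ((x ^ 4 - 1) * (x ^ 4 - x) * (x ^ 4 - x ^ 2) * (x ^ 4 - x ^ 3)) +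
      x ^ 15 * ((x ^ 5 - 1) * (x ^ 5 - x) * (x ^ 5 - x ^ 2))) - x ^ 32
      = x ^ 18 * (x ^ 13 * (x - 2) +
          2 * x ^ 6 * (x ^ 2 * (x - 2) + x * (x - 2) + (x - 2) + 1) +
          4 * x ^ 4 + 2 * x ^ 3 - 2) := by ring
  have hA : 0 ≤ x ^ 13 * (x - 2) := by
    apply mul_nonneg (pow_nonneg (by linarith) _) (by linarith)
  have hB : 0 ≤ 2 * x ^ 6 * (x ^ 2 * (x - 2) + x * (x - 2) + (x - 2) + 1) := by
    apply mul_nonneg (by positivity)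
    have := mul_nonneg (mul_self_nonneg x) (by linarith : (0:ℤ) ≤ x - 2)
    nlinarith
  have hx3 : (8 : ℤ) ≤ x ^ 3 := by nlinarith
  have hx4 : (16 : ℤ) ≤ x ^ 4 := by nlinarith
  have hpos : 0 < x ^ 18 * (x ^ 13 * (x - 2) +
      2 * x ^ 6 * (x ^ 2 * (x - 2) + x * (x - 2) + (x - 2) + 1) +
      4 * x ^ 4 + 2 * x ^ 3 - 2) := by
    apply mul_pos (pow_pos (by linarith) _)
    linarith
  linarith [key, hpos]

theorem sl68_involution_count (f : ℕ) (hf : 1 ≤ f) (q : ℕ) (hq : q = 2 ^ f)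
    (K : Type) [Field K] [Fintype K] (hK : Fintype.card K = q)
    (n : ℕ) (hn : n = 6 ∨ n = 8) :
    q ^ (n ^ 2 / 2) <
      2 * Nat.card {A : Matrix.SpecialLinearGroup (Fin n) K // orderOf A = 2} := by
  have hq2 : 2 ≤ q := by
    rw [hq]
    calc 2 = 2 ^ 1 := rfl
      _ ≤ 2 ^ f := Nat.pow_le_pow_right (by norm_num) hf
  have hchar : ∀ x : K, x + x = 0 := by
    haveI : CharP K (ringChar K) := ringChar.charP K
    obtain ⟨np, hp, hcard⟩ := FiniteField.card K (ringChar K)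
    have h2f : ringChar K ^ (np : ℕ) = 2 ^ f := by rw [← hcard, hK, hq]
    have hdvd : ringChar K ∣ 2 ^ f := h2f ▸ dvd_pow_self (ringChar K) (by exact_mod_cast np.2.ne' : (np:ℕ) ≠ 0)
    have hrc : ringChar K = 2 :=
      (Nat.prime_dvd_prime_iff_eq hp Nat.prime_two).mp (hp.dvd_of_dvd_pow hdvd)
    intro x
    have h20 : (2 : K) = 0 := by
      have := CharP.cast_eq_zero K (ringChar K)
      rw [hrc] at this
      exact_mod_cast this
    rw [← two_mul, h20, zero_mul]
  rw [SL68.involution_card hchar n]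
  rcases hn with rfl | rfl
  · have hle := SL68.family_card_le (K := K) hchar 2 6 (by norm_num) (by norm_num) (by norm_num)
    rw [Nat.card_sum, Nat.card_prod, Nat.card_prod, SL68.card_mat, SL68.card_mat,
      Matrix.card_GL_field, SL68.card_surj 2 4 (by norm_num), hK] at hle
    rw [Fin.prod_univ_three, Fin.prod_univ_two] at hle
    norm_num at hle
    have harith := arith3 q hq2
    have h18 : (6 ^ 2 / 2 : ℕ) = 18 := by norm_num
    rw [h18]
    exact lt_of_lt_of_le harith (Nat.mul_le_mul_left 2 hle)
  · have hle := SL68.family_card_le (K := K) hchar 3 8 (by norm_num) (by norm_num) (by norm_num)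
    rw [Nat.card_sum, Nat.card_prod, Nat.card_prod, SL68.card_mat, SL68.card_mat,
      Matrix.card_GL_field, SL68.card_surj 3 5 (by norm_num), hK] at hle
    rw [Fin.prod_univ_four, Fin.prod_univ_three] at hle
    norm_num at hle
    have harith := arith4 q hq2
    have h32 : (8 ^ 2 / 2 : ℕ) = 32 := by norm_num
    rw [h32]
    exact lt_of_lt_of_le harith (Nat.mul_le_mul_left 2 hle)
end
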